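/- arXiv:0902.1262 — 4 statements merged into one kernel-verified Lean document; each statement's English description precedes it below -/
import Mathlib

section
/- Let k ≥ 2, let s = (s_1,…,s_k) be positive integers, α ∈ ℝ, z ∈ ℂ with Re(z) ≥ 1, and let I be a nonempty subset of {1,…,k}. Then the limit as N → ∞ of ∫_0^1 (∏_{j∈I} f_{s_j,N}(x)) · (∏_{j∈{1,…,k}∖I} f^+_{s_j,N}(x)) · f^+_{z,N}(x+α) dx exists and equals Σ_{J ⊆ I} (−1)^{Σ_{j∈J} s_j} S(s, J, α). -/
open Complex

/-- `e(x) = exp(2πix)`. -/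
noncomputable def efn (x : ℝ) : ℂ := Complex.exp (2 * Real.pi * Complex.I * x)

/-- The partial sum `f⁺_{s,N}(x) = Σ_{m=1}^N e(mx)/m^s`. -/
noncomputable def fplus (s : ℂ) (N : ℕ) (x : ℝ) : ℂ :=
  ∑ m ∈ Finset.Icc 1 N, efn ((m : ℝ) * x) * (((m : ℕ) : ℂ) ^ s)⁻¹

/-- `f_{s,N}(x) = f⁺_{s,N}(x) + (−1)^s f⁺_{s,N}(−x)` for a positive integer `s`. -/
noncomputable def ffull (s : ℕ) (N : ℕ) (x : ℝ) : ℂ :=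
  fplus (s : ℂ) N x + (-1 : ℂ) ^ s * fplus (s : ℂ) N (-x)

/-- `S(s,J,α)`: the sum of `e(m_{k+1}α)/(m₁^{s₁}⋯m_k^{s_k} m_{k+1}^z)` over all tuples
of positive integers `(m₁,…,m_{k+1})` with `Σ_{j∈J} m_j = Σ_{j∉J} m_j` (the complement
taken inside `{1,…,k+1}`). -/
noncomputable def Sval {k : ℕ} (s : Fin k → ℕ) (z : ℂ) (α : ℝ) (J : Finset (Fin k)) : ℂ :=
  ∑' m : {m : Fin (k + 1) → ℕ+ //
      ∑ j ∈ J, (m j.castSucc : ℕ) = (∑ j ∈ Jᶜ, (m j.castSucc : ℕ)) + (m (Fin.last k) : ℕ)},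
    efn (((m.1 (Fin.last k) : ℕ) : ℝ) * α) *
      (∏ j : Fin k, ((m.1 j.castSucc : ℕ) : ℂ) ^ s j)⁻¹ *
        (((m.1 (Fin.last k) : ℕ) : ℂ) ^ z)⁻¹


/-! ### Auxiliary lemmas about `efn` -/

lemma efn_add (x y : ℝ) : efn (x + y) = efn x * efn y := by
  unfold efn; rw [← Complex.exp_add]; push_cast; ring_nf

lemma efn_sum {ι : Type*} (t : Finset ι) (g : ι → ℝ) :
    efn (∑ i ∈ t, g i) = ∏ i ∈ t, efn (g i) := by
  classical
  induction t using Finset.induction with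
  | empty => simp [efn]
  | insert _ _ h ih => rw [Finset.sum_insert h, Finset.prod_insert h, efn_add, ih]

lemma norm_efn (x : ℝ) : ‖efn x‖ = 1 := by
  unfold efn
  rw [Complex.norm_exp]
  have : (2 * (Real.pi:ℂ) * Complex.I * (x:ℝ)).re = 0 := by simp [Complex.mul_re]
  rw [this, Real.exp_zero]

lemma continuous_efn : Continuous efn := by
  unfold efn
  exact Complex.continuous_exp.comp (by continuity)

lemma integral_efn (n : ℤ) : (∫ x in (0:ℝ)..1, efn ((n : ℝ) * x)) = if n = 0 then 1 else 0 := by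
  rcases eq_or_ne n 0 with h | h
  · simp [h, efn]
  · have hc : (2 * (Real.pi:ℂ) * Complex.I * n : ℂ) ≠ 0 := by
      simp [Real.pi_ne_zero, Complex.I_ne_zero, h]
    have heq : ∀ x : ℝ, efn ((n:ℝ) * x) = Complex.exp ((2 * (Real.pi:ℂ) * Complex.I * n) * x) := by
      intro x; unfold efn; push_cast; ring_nf
    simp only [heq]
    rw [integral_exp_mul_complex hc]
    have h1 : (2 * (Real.pi:ℂ) * Complex.I * n) * (1:ℝ) = n * (2 * Real.pi * Complex.I) := by
      push_cast; ring
    have h0 : (2 * (Real.pi:ℂ) * Complex.I * n) * (0:ℝ) = 0 := by push_cast; ring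
    rw [h1, h0, Complex.exp_int_mul_two_pi_mul_I, Complex.exp_zero]
    simp [h]

/-! ### Auxiliary definitions -/

section Defs
variable {k : ℕ}

/-- The constraint, on `ℕ`-tuples. -/
def cnstr (J : Finset (Fin k)) (p : Fin k → ℕ) (n : ℕ) : Prop :=
  ∑ j ∈ J, p j = ∑ j ∈ Jᶜ, p j + n

instance (J : Finset (Fin k)) (p : Fin k → ℕ) (n : ℕ) : Decidable (cnstr J p n) := by
  unfold cnstr; infer_instance

/-- The summand. -/
noncomputable def wt (s : Fin k → ℕ) (z : ℂ) (α : ℝ) (p : Fin k → ℕ) (n : ℕ) : ℂ :=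
  efn ((n : ℝ) * α) * (∏ j, ((p j : ℂ)) ^ s j)⁻¹ * (((n : ℕ) : ℂ) ^ z)⁻¹

/-- Partial sums of the constrained series. -/
noncomputable def TT (s : Fin k → ℕ) (z : ℂ) (α : ℝ) (J : Finset (Fin k)) (N : ℕ) : ℂ :=
  ∑ q ∈ ((Fintype.piFinset fun _ : Fin k => Finset.Icc 1 N) ×ˢ Finset.Icc 1 N).filter
      (fun q => cnstr J q.1 q.2), wt s z α q.1 q.2

/-- The constraint, on `ℕ+`-tuples. -/
def CC (J : Finset (Fin k)) (m : Fin (k + 1) → ℕ+) : Prop :=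
  ∑ j ∈ J, (m j.castSucc : ℕ) = (∑ j ∈ Jᶜ, (m j.castSucc : ℕ)) + (m (Fin.last k) : ℕ)

instance (J : Finset (Fin k)) (m : Fin (k + 1) → ℕ+) : Decidable (CC J m) := by
  unfold CC; infer_instance

/-- The summand, on `ℕ+`-tuples. -/
noncomputable def fbar (s : Fin k → ℕ) (z : ℂ) (α : ℝ) (m : Fin (k + 1) → ℕ+) : ℂ :=
  efn (((m (Fin.last k) : ℕ) : ℝ) * α) *
    (∏ j : Fin k, ((m j.castSucc : ℕ) : ℂ) ^ s j)⁻¹ * (((m (Fin.last k) : ℕ) : ℂ) ^ z)⁻¹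

lemma Sval_eq (s : Fin k → ℕ) (z : ℂ) (α : ℝ) (J : Finset (Fin k)) :
    Sval s z α J = ∑' m : {m : Fin (k + 1) → ℕ+ // CC J m}, fbar s z α m.1 := rfl

/-- The signed frequency of a term. -/
def Lint (J : Finset (Fin k)) (p : Fin k → ℕ) (n : ℕ) : ℤ :=
  (∑ j ∈ Jᶜ, (p j : ℤ)) + n - ∑ j ∈ J, (p j : ℤ)

lemma toPNat'_eq {n : ℕ} (h : 1 ≤ n) : ((n.toPNat' : ℕ)) = n := by
  rw [Nat.toPNat'_coe]; exact if_pos (Nat.lt_of_lt_of_le Nat.zero_lt_one h)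

/-- `ℕ+`-valued tuples with coordinates at most `N`. -/
noncomputable def GG (k' N : ℕ) : Finset (Fin k' → ℕ+) :=
  Fintype.piFinset fun _ => (Finset.Icc 1 N).preimage (fun n : ℕ+ => (n : ℕ))
    (Set.injOn_of_injective (fun _ _ h => PNat.coe_injective h))

lemma mem_GG {k' N : ℕ} (m : Fin k' → ℕ+) : m ∈ GG k' N ↔ ∀ i, (m i : ℕ) ≤ N := by
  simp only [GG, Fintype.mem_piFinset, Finset.mem_preimage, Finset.mem_Icc]
  exact forall_congr' fun i => by
    constructor
    · exact fun h => h.2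
    · exact fun h => ⟨(m i).one_le, h⟩

lemma GG_mono {k' : ℕ} : Monotone (GG k') := by
  intro a b hab
  apply Fintype.piFinset_subset
  intro i
  apply Finset.monotone_preimage (fun x y h => PNat.coe_injective h)
  exact Finset.Icc_subset_Icc le_rfl hab

end Defs

lemma summable_pi_prod_fin {β : Type} {g : β → ℝ} (hg0 : ∀ n, 0 ≤ g n) (hg : Summable g)
    (n : ℕ) : Summable (fun v : Fin n → β => ∏ i, g (v i)) := by
  induction n with
  | zero =>
    haveI : Unique (Fin 0 → β) := ⟨⟨fun x => x.elim0⟩, fun f => funext fun x => x.elim0⟩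
    haveI : Finite (Fin 0 → β) := Finite.of_subsingleton
    exact Summable.of_finite
  | succ n ih =>
    have hsum : Summable (fun p : β × (Fin n → β) => g p.1 * ∏ i, g (p.2 i)) := by
      refine Summable.mul_of_nonneg (f := g) (g := fun v : Fin n → β => ∏ i, g (v i)) hg ih ?_ ?_
      · intro x; exact hg0 x
      · intro p; exact Finset.prod_nonneg fun i _ => hg0 _
    have key : (fun v : Fin (n+1) → β => ∏ i, g (v i))
        = (fun p : β × (Fin n → β) => g p.1 * ∏ i, g (p.2 i)) ∘ (Fin.consEquiv (fun _ => β)).symm := by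
      funext v
      simp only [Function.comp_apply, Fin.consEquiv_symm_apply]
      rw [Fin.prod_univ_succ]
      rfl
    rw [key]
    exact (Equiv.summable_iff _).mpr hsum

lemma summable_pi_prod {β : Type} {g : β → ℝ} (hg0 : ∀ n, 0 ≤ g n) (hg : Summable g)
    (κ : Type) [Fintype κ] : Summable (fun v : κ → β => ∏ i, g (v i)) := by
  have e := Fintype.equivFin κ
  have key : ((fun v : κ → β => ∏ i, g (v i)) ∘ (Equiv.arrowCongr e.symm (Equiv.refl β)))
      = fun w : Fin (Fintype.card κ) → β => ∏ i, g (w (e i)) := by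
    funext w
    simp [Function.comp_apply]
  have h2 : Summable ((fun v : κ → β => ∏ i, g (v i)) ∘ (Equiv.arrowCongr e.symm (Equiv.refl β))) := by
    rw [key]
    have := summable_pi_prod_fin hg0 hg (Fintype.card κ)
    have key2 : (fun w : Fin (Fintype.card κ) → β => ∏ i, g (w (e i)))
        = fun w : Fin (Fintype.card κ) → β => ∏ i, g (w i) := by
      funext w
      exact Fintype.prod_equiv e _ _ (fun i => rfl)
    rw [key2]; exact this
  exact (Equiv.summable_iff _).mp h2

lemma summable_pnat_rpow {p : ℝ} (hp : 1 < p) : Summable (fun n : ℕ+ => ((n:ℕ):ℝ) ^ (-p)) := by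
  have h : Summable (fun n : ℕ => ((n:ℝ)) ^ (-p)) := Real.summable_nat_rpow.mpr (by linarith)
  exact h.comp_injective (fun a b hab => PNat.coe_injective hab)

section S
variable {k : ℕ} (s : Fin k → ℕ) (z : ℂ) (α : ℝ)

/-- The norm of the summand is at most the product of the reciprocals. -/
lemma norm_fbar_le (hs : ∀ j, 1 ≤ s j) (hz : 1 ≤ z.re) (m : Fin (k + 1) → ℕ+) :
    ‖fbar s z α m‖ ≤ ∏ i, ((m i : ℕ) : ℝ)⁻¹ := by
  have hpos : ∀ i, (0:ℝ) < ((m i : ℕ) : ℝ) := fun i => by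
    exact_mod_cast (m i).2
  have hone : ∀ i, (1:ℝ) ≤ ((m i : ℕ) : ℝ) := fun i => by
    exact_mod_cast (m i).one_le
  have hnorm : ‖fbar s z α m‖ =
      (∏ j : Fin k, ((m j.castSucc : ℕ) : ℝ) ^ s j)⁻¹ *
        (((m (Fin.last k) : ℕ) : ℝ) ^ z.re)⁻¹ := by
    rw [fbar, norm_mul, norm_mul, norm_efn, one_mul, norm_inv, norm_inv]
    congr 1
    · congr 1
      rw [norm_prod]
      exact Finset.prod_congr rfl fun j _ => by rw [norm_pow, Complex.norm_natCast]
    · congr 1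
      rw [show (((m (Fin.last k) : ℕ)) : ℂ) = ((((m (Fin.last k) : ℕ)) : ℝ) : ℂ) by push_cast; rfl]
      rw [Complex.norm_cpow_eq_rpow_re_of_pos (hpos _)]
  rw [hnorm]
  have h1 : (∏ j : Fin k, ((m j.castSucc : ℕ) : ℝ) ^ s j)⁻¹ ≤
      ∏ j : Fin k, ((m j.castSucc : ℕ) : ℝ)⁻¹ := by
    rw [← Finset.prod_inv_distrib]
    apply Finset.prod_le_prod
    · intro j _; positivity
    · intro j _
      apply inv_anti₀ (hpos _)
      exact le_self_pow₀ (hone _) (Nat.one_le_iff_ne_zero.mp (hs j))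
  have h2 : (((m (Fin.last k) : ℕ) : ℝ) ^ z.re)⁻¹ ≤ ((m (Fin.last k) : ℕ) : ℝ)⁻¹ := by
    apply inv_anti₀ (hpos _)
    calc ((m (Fin.last k) : ℕ) : ℝ) = ((m (Fin.last k) : ℕ) : ℝ) ^ (1:ℝ) := (Real.rpow_one _).symm
    _ ≤ ((m (Fin.last k) : ℕ) : ℝ) ^ z.re := Real.rpow_le_rpow_of_exponent_le (hone _) hz
  calc (∏ j : Fin k, ((m j.castSucc : ℕ) : ℝ) ^ s j)⁻¹ * (((m (Fin.last k) : ℕ) : ℝ) ^ z.re)⁻¹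
      ≤ (∏ j : Fin k, ((m j.castSucc : ℕ) : ℝ)⁻¹) * ((m (Fin.last k) : ℕ) : ℝ)⁻¹ := by
        apply mul_le_mul h1 h2 (by positivity) (Finset.prod_nonneg fun j _ => by positivity)
    _ = ∏ i, ((m i : ℕ) : ℝ)⁻¹ := (Fin.prod_univ_castSucc (fun i => ((m i : ℕ) : ℝ)⁻¹)).symm

lemma summable_fbar (hs : ∀ j, 1 ≤ s j) (hz : 1 ≤ z.re) (J : Finset (Fin k)) :
    Summable (fun m : {m : Fin (k + 1) → ℕ+ // CC J m} => fbar s z α m.1) := by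
  classical
  by_cases hJe : J = ∅
  · subst hJe
    haveI : IsEmpty {m : Fin (k + 1) → ℕ+ // CC (∅ : Finset (Fin k)) m} := by
      constructor
      rintro ⟨m, hm⟩
      unfold CC at hm
      rw [Finset.sum_empty] at hm
      have hlast : 0 < (m (Fin.last k) : ℕ) := (m (Fin.last k)).pos
      omega
    exact Summable.of_finite
  · obtain ⟨a0, ha0⟩ := Finset.nonempty_iff_ne_empty.mpr hJe
    have hk0 : 0 < k := a0.pos
    set q : ℝ := 1 + 1/k with hqdef
    have hq1 : 1 < q := by
      have : (0:ℝ) < 1/k := by positivity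
      rw [hqdef]; linarith
    set maj : Fin k → {m : Fin (k + 1) → ℕ+ // CC J m} → ℝ := fun a m =>
      (k:ℝ) * ∏ i ∈ Finset.univ.erase a.castSucc, ((m.1 i : ℕ):ℝ) ^ (-q) with hmaj
    have hmaj_app : ∀ a m, maj a m = (k:ℝ) * ∏ i ∈ Finset.univ.erase a.castSucc,
        ((m.1 i : ℕ):ℝ) ^ (-q) := fun a m => rfl
    have hmaj0 : ∀ a m, 0 ≤ maj a m := by
      intro a m
      apply mul_nonneg (by positivity)
      exact Finset.prod_nonneg fun i _ => Real.rpow_nonneg (Nat.cast_nonneg _) _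
    have hmajsum : ∀ a ∈ J, Summable (maj a) := by
      intro a haJ
      have hg0 : ∀ n : ℕ+, 0 ≤ ((n:ℕ):ℝ) ^ (-q) := fun n => Real.rpow_nonneg (Nat.cast_nonneg _) _
      have hg : Summable (fun n : ℕ+ => ((n:ℕ):ℝ) ^ (-q)) := summable_pnat_rpow hq1
      have hH := summable_pi_prod hg0 hg {i : Fin (k+1) // i ≠ a.castSucc}
      have hinj : Function.Injective
          (fun (m : {m : Fin (k + 1) → ℕ+ // CC J m}) (i : {i : Fin (k+1) // i ≠ a.castSucc}) =>
            m.1 i.1) := by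
        intro m m' h
        have heq : ∀ i, i ≠ a.castSucc → m.1 i = m'.1 i := fun i hi => congrFun h ⟨i, hi⟩
        apply Subtype.ext
        funext i
        by_cases hi : i = a.castSucc
        · subst hi
          have hc := m.2
          have hc' := m'.2
          unfold CC at hc hc'
          rw [← Finset.add_sum_erase J _ haJ] at hc hc'
          have e1 : ∑ j ∈ J.erase a, (m.1 j.castSucc : ℕ) = ∑ j ∈ J.erase a, (m'.1 j.castSucc : ℕ) := by
            apply Finset.sum_congr rfl
            intro j hj
            rw [heq j.castSucc (fun hcontra => (Finset.mem_erase.mp hj).1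
              (Fin.castSucc_injective k hcontra))]
          have e2 : ∑ j ∈ Jᶜ, (m.1 j.castSucc : ℕ) = ∑ j ∈ Jᶜ, (m'.1 j.castSucc : ℕ) := by
            apply Finset.sum_congr rfl
            intro j hj
            rw [heq j.castSucc (fun hcontra => by
              have : j = a := Fin.castSucc_injective k hcontra
              subst this
              exact (Finset.mem_compl.mp hj) haJ)]
          have e3 : m.1 (Fin.last k) = m'.1 (Fin.last k) := by
            apply heq
            intro hcontra
            exact absurd (congrArg Fin.val hcontra) (by simp [Fin.last]; omega)
          apply PNat.coe_injective
          rw [e1, e2, e3] at hc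
          omega
        · exact heq i hi
      have h1 := hH.comp_injective hinj
      have h2 := h1.mul_left (k:ℝ)
      have key : maj a = fun i => (k:ℝ) *
          ((fun v : {i : Fin (k+1) // i ≠ a.castSucc} → ℕ+ => ∏ i, ((v i : ℕ):ℝ) ^ (-q)) ∘
            (fun (m : {m : Fin (k + 1) → ℕ+ // CC J m}) (i : {i : Fin (k+1) // i ≠ a.castSucc}) =>
              m.1 i.1)) i := by
        funext m
        simp only [Function.comp_apply]
        rw [hmaj_app]
        congr 1
        apply Finset.prod_subtype
        intro x
        simp [Finset.mem_erase]
      rw [key]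
      exact h2
    apply Summable.of_norm_bounded (g := fun m => ∑ a ∈ J, maj a m) (summable_sum hmajsum)
    intro m
    -- step (ii): find a good coordinate
    obtain ⟨a, haJ, hamax⟩ := Finset.exists_max_image J (fun j => (m.1 j.castSucc : ℕ)) ⟨a0, ha0⟩
    have hcard : (Finset.univ.erase a.castSucc : Finset (Fin (k+1))).card = k := by
      rw [Finset.card_erase_of_mem (Finset.mem_univ _), Finset.card_univ, Fintype.card_fin]
      omega
    set M : ℕ := (m.1 a.castSucc : ℕ) with hM
    have hMpos : 0 < M := (m.1 a.castSucc).pos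
    have hbound : ∀ i : Fin (k+1), (m.1 i : ℕ) ≤ k * M := by
      have hsumJ : ∑ j ∈ J, (m.1 j.castSucc : ℕ) ≤ k * M := by
        calc ∑ j ∈ J, (m.1 j.castSucc : ℕ) ≤ J.card • M :=
              Finset.sum_le_card_nsmul J _ M (fun j hj => hamax j hj)
          _ = J.card * M := by rw [smul_eq_mul]
          _ ≤ k * M := by
              apply Nat.mul_le_mul_right
              calc J.card ≤ (Finset.univ : Finset (Fin k)).card := Finset.card_le_card (Finset.subset_univ J)
                _ = k := by rw [Finset.card_univ, Fintype.card_fin]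
      intro i
      induction i using Fin.lastCases with
      | last =>
        have hc := m.2
        unfold CC at hc
        have : (m.1 (Fin.last k) : ℕ) ≤ ∑ j ∈ J, (m.1 j.castSucc : ℕ) := by omega
        omega
      | cast j =>
        by_cases hjJ : j ∈ J
        · calc (m.1 j.castSucc : ℕ) ≤ M := hamax j hjJ
            _ ≤ k * M := Nat.le_mul_of_pos_left M hk0
        · have hc := m.2
          unfold CC at hc
          have h1 : (m.1 j.castSucc : ℕ) ≤ ∑ j' ∈ Jᶜ, (m.1 j'.castSucc : ℕ) :=
            Finset.single_le_sum (f := fun j' : Fin k => (m.1 j'.castSucc : ℕ))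
              (fun _ _ => Nat.zero_le _) (Finset.mem_compl.mpr hjJ)
          omega
    -- now the real inequality
    have hppos : ∀ i : Fin (k+1), (0:ℝ) < ((m.1 i : ℕ):ℝ) := fun i => by exact_mod_cast (m.1 i).pos
    set u := (Finset.univ.erase a.castSucc : Finset (Fin (k+1))) with hu
    set A : ℝ := ∏ i ∈ u, ((m.1 i : ℕ):ℝ)⁻¹ with hA
    set B : ℝ := ∏ i ∈ u, ((m.1 i : ℕ):ℝ) ^ (-(1/(k:ℝ))) with hB
    set C : ℝ := ∏ i ∈ u, ((m.1 i : ℕ):ℝ) ^ ((1:ℝ)/(k:ℝ)) with hC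
    have hApos : 0 < A := Finset.prod_pos fun i _ => by positivity
    have hCpos : 0 < C := Finset.prod_pos fun i _ => Real.rpow_pos_of_pos (hppos i) _
    have hBC : B = C⁻¹ := by
      rw [hB, hC, ← Finset.prod_inv_distrib]
      apply Finset.prod_congr rfl
      intro i _
      rw [← Real.rpow_neg (le_of_lt (hppos i))]
    have hCle : C ≤ (k:ℝ) * M := by
      have h1 : C ≤ ∏ _i ∈ u, ((k:ℝ) * M) ^ ((1:ℝ)/(k:ℝ)) := by
        apply Finset.prod_le_prod
        · intro i _; positivity
        · intro i _
          apply Real.rpow_le_rpow (le_of_lt (hppos i)) _ (by positivity)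
          exact_mod_cast hbound i
      rw [Finset.prod_const, hcard] at h1
      calc C ≤ (((k:ℝ) * M) ^ ((1:ℝ)/(k:ℝ))) ^ k := h1
        _ = ((k:ℝ) * M) ^ (((1:ℝ)/(k:ℝ)) * k) := by
            rw [← Real.rpow_natCast (((k:ℝ) * M) ^ ((1:ℝ)/(k:ℝ))) k, ← Real.rpow_mul (by positivity)]
        _ = (k:ℝ) * M := by
            rw [show ((1:ℝ)/(k:ℝ)) * k = 1 by field_simp, Real.rpow_one]
    have hMB : (M:ℝ)⁻¹ ≤ (k:ℝ) * B := by
      rw [hBC]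
      have h1 : ((k:ℝ) * M)⁻¹ ≤ C⁻¹ := inv_anti₀ hCpos hCle
      calc (M:ℝ)⁻¹ = (k:ℝ) * ((k:ℝ)*M)⁻¹ := by
            rw [mul_inv, ← mul_assoc, mul_inv_cancel₀ (by positivity : (k:ℝ) ≠ 0), one_mul]
        _ ≤ (k:ℝ) * C⁻¹ := by
            apply mul_le_mul_of_nonneg_left h1 (by positivity)
    have hP : ∏ i, ((m.1 i : ℕ):ℝ)⁻¹ = (M:ℝ)⁻¹ * A := by
      rw [hA, hu, hM]
      exact (Finset.mul_prod_erase Finset.univ (fun i => ((m.1 i : ℕ):ℝ)⁻¹)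
        (Finset.mem_univ a.castSucc)).symm
    have hgoal : ∏ i, ((m.1 i : ℕ):ℝ)⁻¹ ≤ maj a m := by
      have hqsplit : ∀ i ∈ u, ((m.1 i : ℕ):ℝ) ^ (-q) = ((m.1 i : ℕ):ℝ)⁻¹ * ((m.1 i : ℕ):ℝ) ^ (-(1/(k:ℝ))) := by
        intro i _
        rw [hqdef, show -(1 + 1/(k:ℝ)) = (-1) + (-(1/(k:ℝ))) by ring,
          Real.rpow_add (hppos i), Real.rpow_neg_one]
      have hmaja : maj a m = (k:ℝ) * (A * B) := by
        rw [hmaj_app, hA, hB, ← Finset.prod_mul_distrib]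
        congr 1
        exact Finset.prod_congr rfl hqsplit
      rw [hP, hmaja]
      calc (M:ℝ)⁻¹ * A ≤ ((k:ℝ) * B) * A := mul_le_mul_of_nonneg_right hMB (le_of_lt hApos)
        _ = (k:ℝ) * (A * B) := by ring
    calc ‖fbar s z α m.1‖ ≤ ∏ i, ((m.1 i : ℕ):ℝ)⁻¹ := norm_fbar_le s z α hs hz m.1
      _ ≤ maj a m := hgoal
      _ ≤ ∑ a' ∈ J, maj a' m := Finset.single_le_sum (fun a' _ => hmaj0 a' m) haJ

end S

section Step1
variable {k : ℕ} (s : Fin k → ℕ) (z : ℂ) (α : ℝ)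

lemma step1 (I : Finset (Fin k)) (N : ℕ) :
    (∫ x in (0:ℝ)..1,
        (∏ j ∈ I, ffull (s j) N x) * (∏ j ∈ Iᶜ, fplus ((s j : ℕ) : ℂ) N x) *
          fplus z N (x + α))
    = ∑ J ∈ I.powerset, (-1 : ℂ) ^ (∑ j ∈ J, s j) * TT s z α J N := by
  classical
  set A := ((Fintype.piFinset fun _ : Fin k => Finset.Icc 1 N) ×ˢ Finset.Icc 1 N :
    Finset ((Fin k → ℕ) × ℕ)) with hA
  -- pointwise expansion of the integrand
  have hpoint : ∀ x : ℝ,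
      (∏ j ∈ I, ffull (s j) N x) * (∏ j ∈ Iᶜ, fplus ((s j : ℕ) : ℂ) N x) *
          fplus z N (x + α)
      = ∑ J ∈ I.powerset, ∑ q ∈ A,
          (-1 : ℂ) ^ (∑ j ∈ J, s j) * (efn ((Lint J q.1 q.2 : ℝ) * x) * wt s z α q.1 q.2) := by
    intro x
    -- expand the ffull product
    have h1 : ∏ j ∈ I, ffull (s j) N x
        = ∑ J ∈ I.powerset, ((-1 : ℂ) ^ (∑ j ∈ J, s j) *
            ((∏ j ∈ J, fplus ((s j : ℕ) : ℂ) N (-x)) * ∏ j ∈ I \ J, fplus ((s j : ℕ) : ℂ) N x)) := by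
      have e1 : ∏ j ∈ I, ffull (s j) N x
          = ∏ j ∈ I, ((-1 : ℂ) ^ (s j) * fplus ((s j : ℕ) : ℂ) N (-x) + fplus ((s j : ℕ) : ℂ) N x) :=
        Finset.prod_congr rfl fun j _ => by rw [ffull, add_comm]
      rw [e1, Finset.prod_add]
      apply Finset.sum_congr rfl
      intro J hJ
      rw [Finset.prod_mul_distrib, Finset.prod_pow_eq_pow_sum]
      ring
    rw [h1, Finset.sum_mul, Finset.sum_mul]
    apply Finset.sum_congr rfl
    intro J hJ
    have hJI : J ⊆ I := Finset.mem_powerset.mp hJ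
    -- combine the three products into one over all of Fin k
    have h2 : (∏ j ∈ I \ J, fplus ((s j : ℕ) : ℂ) N x) * ∏ j ∈ Iᶜ, fplus ((s j : ℕ) : ℂ) N x
        = ∏ j ∈ Jᶜ, fplus ((s j : ℕ) : ℂ) N x := by
      rw [← Finset.prod_union]
      · apply Finset.prod_congr _ fun _ _ => rfl
        ext j
        simp only [Finset.mem_union, Finset.mem_sdiff, Finset.mem_compl]
        have hj2 : j ∈ J → j ∈ I := fun h => hJI h
        tauto
      · exact Finset.disjoint_left.mpr fun j hj hj' => (Finset.mem_compl.mp hj') (Finset.mem_sdiff.mp hj).1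
    have h3 : (∏ j ∈ J, fplus ((s j : ℕ) : ℂ) N (-x)) * ∏ j ∈ Jᶜ, fplus ((s j : ℕ) : ℂ) N x
        = ∏ j : Fin k, fplus ((s j : ℕ) : ℂ) N (if j ∈ J then -x else x) := by
      rw [← Finset.prod_mul_prod_compl J]
      congr 1
      · exact Finset.prod_congr rfl fun j hj => by rw [if_pos hj]
      · exact Finset.prod_congr rfl fun j hj => by rw [if_neg (Finset.mem_compl.mp hj)]
    -- expand into the big sum
    have h4 : (∏ j : Fin k, fplus ((s j : ℕ) : ℂ) N (if j ∈ J then -x else x)) * fplus z N (x + α)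
        = ∑ q ∈ A, efn ((Lint J q.1 q.2 : ℝ) * x) * wt s z α q.1 q.2 := by
      unfold fplus
      rw [Finset.prod_univ_sum, Finset.sum_mul_sum, hA, Finset.sum_product]
      apply Finset.sum_congr rfl
      intro p hp
      apply Finset.sum_congr rfl
      intro n hn
      -- now pointwise identity for fixed p, n
      have hw : ∀ j : Fin k, (((p j : ℕ) : ℂ) ^ ((s j : ℕ) : ℂ))⁻¹ = (((p j : ℕ) : ℂ) ^ (s j))⁻¹ :=
        fun j => by rw [Complex.cpow_natCast]
      rw [Finset.prod_mul_distrib]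
      simp only [hw]
      rw [← efn_sum]
      have hfreq : ∑ j : Fin k, (p j : ℝ) * (if j ∈ J then -x else x) + (n : ℝ) * (x + α)
          = (Lint J p n : ℝ) * x + (n : ℝ) * α := by
        have hsplit : ∑ j : Fin k, (p j : ℝ) * (if j ∈ J then -x else x)
            = (∑ j ∈ J, (p j : ℝ) * (-x)) + ∑ j ∈ Jᶜ, (p j : ℝ) * x := by
          rw [← Finset.sum_add_sum_compl J]
          congr 1
          · exact Finset.sum_congr rfl fun j hj => by rw [if_pos hj]
          · exact Finset.sum_congr rfl fun j hj => by rw [if_neg (Finset.mem_compl.mp hj)]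
        rw [hsplit, Lint]
        push_cast
        rw [← Finset.sum_mul, ← Finset.sum_mul]
        ring
      calc (efn (∑ j : Fin k, (p j : ℝ) * (if j ∈ J then -x else x)))
            * (∏ j : Fin k, (((p j : ℕ) : ℂ) ^ (s j))⁻¹) * (efn ((n:ℝ) * (x + α)) * (((n : ℕ) : ℂ) ^ z)⁻¹)
          = efn ((∑ j : Fin k, (p j : ℝ) * (if j ∈ J then -x else x)) + (n : ℝ) * (x + α))
            * ((∏ j : Fin k, (((p j : ℕ) : ℂ) ^ (s j))⁻¹) * (((n : ℕ) : ℂ) ^ z)⁻¹) := by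
            rw [efn_add]; ring
        _ = efn ((Lint J p n : ℝ) * x + (n : ℝ) * α)
            * ((∏ j : Fin k, (((p j : ℕ) : ℂ) ^ (s j))⁻¹) * (((n : ℕ) : ℂ) ^ z)⁻¹) := by rw [hfreq]
        _ = efn ((Lint J p n : ℝ) * x) * wt s z α p n := by
            rw [efn_add, wt, ← Finset.prod_inv_distrib]
            ring
    have key : ((-1 : ℂ) ^ (∑ j ∈ J, s j) *
          ((∏ j ∈ J, fplus ((s j : ℕ) : ℂ) N (-x)) * ∏ j ∈ I \ J, fplus ((s j : ℕ) : ℂ) N x)) *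
          (∏ j ∈ Iᶜ, fplus ((s j : ℕ) : ℂ) N x) * fplus z N (x + α)
        = (-1 : ℂ) ^ (∑ j ∈ J, s j) *
          ((∏ j ∈ J, fplus ((s j : ℕ) : ℂ) N (-x)) *
            ((∏ j ∈ I \ J, fplus ((s j : ℕ) : ℂ) N x) * (∏ j ∈ Iᶜ, fplus ((s j : ℕ) : ℂ) N x)) *
              fplus z N (x + α)) := by ring
    rw [key, h2, h3, h4, Finset.mul_sum]
  -- now integrate term by term
  have hLiff : ∀ (J : Finset (Fin k)) (p : Fin k → ℕ) (n : ℕ), (Lint J p n = 0 ↔ cnstr J p n) := by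
    intro J p n
    unfold Lint cnstr
    rw [← Nat.cast_sum, ← Nat.cast_sum]
    omega
  have hcont : ∀ (J : Finset (Fin k)) (q : (Fin k → ℕ) × ℕ), Continuous fun x : ℝ =>
      (-1 : ℂ) ^ (∑ j ∈ J, s j) * (efn ((Lint J q.1 q.2 : ℝ) * x) * wt s z α q.1 q.2) :=
    fun J q => continuous_const.mul ((continuous_efn.comp (continuous_const.mul
      continuous_id)).mul continuous_const)
  simp only [hpoint]
  rw [intervalIntegral.integral_finset_sum (fun J _ => (continuous_finset_sum _
    (fun q _ => hcont J q)).intervalIntegrable _ _)]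
  apply Finset.sum_congr rfl
  intro J _
  rw [intervalIntegral.integral_finset_sum (fun q _ => (hcont J q).intervalIntegrable _ _)]
  have hint : ∀ q ∈ A, (∫ x in (0:ℝ)..1,
      (-1 : ℂ) ^ (∑ j ∈ J, s j) * (efn ((Lint J q.1 q.2 : ℝ) * x) * wt s z α q.1 q.2))
      = (-1 : ℂ) ^ (∑ j ∈ J, s j) *
        (if cnstr J q.1 q.2 then wt s z α q.1 q.2 else 0) := by
    intro q _
    rw [intervalIntegral.integral_const_mul]
    congr 1
    rw [intervalIntegral.integral_mul_const, integral_efn]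
    by_cases hc : cnstr J q.1 q.2
    · rw [if_pos ((hLiff J q.1 q.2).mpr hc), if_pos hc, one_mul]
    · rw [if_neg (fun h => hc ((hLiff J q.1 q.2).mp h)), if_neg hc, zero_mul]
  rw [Finset.sum_congr rfl hint, ← Finset.mul_sum]
  congr 1
  rw [TT, ← hA, Finset.sum_filter]

end Step1

section Step2'
variable {k : ℕ} (s : Fin k → ℕ) (z : ℂ) (α : ℝ)
lemma TT_eq (J : Finset (Fin k)) (N : ℕ) :
    TT s z α J N = ∑ m ∈ ((GG (k+1) N).subtype (CC J)), fbar s z α m.1 := by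
  classical
  rw [Finset.sum_subtype_eq_sum_filter, TT]
  refine Finset.sum_nbij' (i := fun m : Fin (k+1) → ℕ+ => ((fun j => (m j.castSucc : ℕ)), (m (Fin.last k) : ℕ)))
    (j := fun q : (Fin k → ℕ) × ℕ => fun i : Fin (k+1) =>
      Fin.lastCases q.2.toPNat' (fun j' => (q.1 j').toPNat') i) ?_ ?_ ?_ ?_ ?_ |>.symm
  · -- membership forward
    intro m hm
    simp only [Finset.mem_filter, mem_GG] at hm
    obtain ⟨h1, h2⟩ := hm
    simp only [Finset.mem_filter, Finset.mem_product, Fintype.mem_piFinset, Finset.mem_Icc]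
    refine ⟨⟨fun j => ⟨(m j.castSucc).one_le, h1 _⟩, ⟨(m (Fin.last k)).one_le, h1 _⟩⟩, h2⟩
  · -- membership backward
    intro q hq
    simp only [Finset.mem_filter, Finset.mem_product, Fintype.mem_piFinset, Finset.mem_Icc] at hq
    obtain ⟨⟨h1, h2⟩, h3⟩ := hq
    have hp : ∀ j', (q.1 j').toPNat' = (⟨q.1 j', (h1 j').1⟩ : ℕ+) := by
      intro j'; apply PNat.coe_injective; simp [toPNat'_eq (h1 j').1]
    have hn : q.2.toPNat' = (⟨q.2, h2.1⟩ : ℕ+) := by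
      apply PNat.coe_injective; simp [toPNat'_eq h2.1]
    simp only [Finset.mem_filter, mem_GG]
    constructor
    · intro i
      induction i using Fin.lastCases with
      | last => rw [Fin.lastCases_last]; simp [hn, h2.2]
      | cast j' => rw [Fin.lastCases_castSucc]; simp [hp, (h1 j').2]
    · show CC J _
      unfold CC
      simp only [Fin.lastCases_castSucc, Fin.lastCases_last]
      simp only [hp, hn]
      exact h3
  · -- left inverse
    intro m hm
    funext i
    induction i using Fin.lastCases with
    | last => simp only [Fin.lastCases_last]; apply PNat.coe_injective; exact toPNat'_eq (m (Fin.last k)).2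
    | cast j' => simp only [Fin.lastCases_castSucc]; apply PNat.coe_injective; exact toPNat'_eq (m j'.castSucc).2
  · -- right inverse
    intro q hq
    simp only [Finset.mem_filter, Finset.mem_product, Fintype.mem_piFinset, Finset.mem_Icc] at hq
    obtain ⟨⟨h1, h2⟩, h3⟩ := hq
    refine Prod.ext ?_ ?_
    · funext j'; simp [Fin.lastCases_castSucc, toPNat'_eq (h1 j').1]
    · simp [Fin.lastCases_last, toPNat'_eq h2.1]
  · -- summand equality
    intro m hm
    rfl

lemma step2 (hs : ∀ j, 1 ≤ s j) (hz : 1 ≤ z.re) (J : Finset (Fin k)) :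
    Filter.Tendsto (TT s z α J) Filter.atTop
      (nhds (∑' m : {m : Fin (k + 1) → ℕ+ // CC J m}, fbar s z α m.1)) := by
  classical
  have hsum := summable_fbar s z α hs hz J
  have hmono : Monotone (fun N => (GG (k+1) N).subtype (CC J)) :=
    fun a b hab => Finset.subtype_mono (GG_mono hab)
  have hcov : ∀ m : {m : Fin (k + 1) → ℕ+ // CC J m},
      ∃ N, m ∈ (GG (k+1) N).subtype (CC J) := by
    intro m
    refine ⟨Finset.univ.sup (fun i => (m.1 i : ℕ)), ?_⟩
    rw [Finset.mem_subtype, mem_GG]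
    exact fun i => Finset.le_sup (f := fun i => ((m.1 i : ℕ))) (Finset.mem_univ i)
  have h1 := Filter.tendsto_atTop_finset_of_monotone hmono hcov
  have h2 := hsum.hasSum.comp h1
  simpa only [Function.comp_def, ← TT_eq] using h2



end Step2'


theorem stmt10 (k : ℕ) (hk : 2 ≤ k) (s : Fin k → ℕ) (hs : ∀ j, 1 ≤ s j) (α : ℝ)
    (z : ℂ) (hz : 1 ≤ z.re) (I : Finset (Fin k)) (hI : I.Nonempty) :
    Filter.Tendsto
      (fun N : ℕ => ∫ x in (0 : ℝ)..1,
        (∏ j ∈ I, ffull (s j) N x) * (∏ j ∈ Iᶜ, fplus ((s j : ℕ) : ℂ) N x) *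
          fplus z N (x + α))
      Filter.atTop
      (nhds (∑ J ∈ I.powerset, (-1 : ℂ) ^ (∑ j ∈ J, s j) * Sval s z α J)) := by
  simp only [step1 s z α I]
  refine tendsto_finset_sum _ fun J _ => Filter.Tendsto.const_mul _ ?_
  rw [Sval_eq]
  exact step2 s z α hs hz J
end

section
/- Let k ≥ 2, let s = (s_1,…,s_k) be positive integers, α ∈ ℝ, and z ∈ ℂ with Re(z) ≥ 1. Then (−1)^{k+s_1+⋯+s_k} ζ_MT(s_1,…,s_k,z; 0,…,0,α) + Σ_{j=1}^k (−1)^{s_j} S(s, {j}, α) = Σ_{I ⊆ {1,…,k}, |I| ≥ 2} (−1)^{|I|} Σ_{J ⊆ I} (−1)^{Σ_{j∈J} s_j} S(s, J, α). (Here S(s,{j},α) coincides with the colored Mordell–Tornheim value in which the j-th entry of (s_1,…,s_k) is replaced by z with color α, s_j is appended as the last argument, and all other colors are 0; and ζ_MT(s_1,…,s_k,z;0,…,0,α) = S(s,{1,…,k},α).) -/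
open Complex

/-- The colored Mordell–Tornheim value `ζ_MT(s₁,…,s_k,t; α₁,…,α_{k+1})`. -/
noncomputable def MTC {k : ℕ} (s : Fin k → ℂ) (t : ℂ) (α : Fin (k + 1) → ℝ) : ℂ :=
  ∑' m : Fin k → ℕ+,
    (∏ j : Fin k, efn (((m j : ℕ) : ℝ) * α j.castSucc) * (((m j : ℕ) : ℂ) ^ s j)⁻¹) *
      (efn (((∑ j : Fin k, (m j : ℕ) : ℕ) : ℝ) * α (Fin.last k)) *
        ((∑ j : Fin k, ((m j : ℕ) : ℂ)) ^ t)⁻¹)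

lemma Sval_empty {k : ℕ} (s : Fin k → ℕ) (z : ℂ) (α : ℝ) :
    Sval s z α (∅ : Finset (Fin k)) = 0 := by
  have : IsEmpty {m : Fin (k + 1) → ℕ+ //
      ∑ j ∈ (∅ : Finset (Fin k)), (m j.castSucc : ℕ) =
        (∑ j ∈ (∅ : Finset (Fin k))ᶜ, (m j.castSucc : ℕ)) + (m (Fin.last k) : ℕ)} := by
    constructor
    rintro ⟨m, hm⟩
    simp only [Finset.sum_empty] at hm
    have := (m (Fin.last k)).pos
    omega
  exact tsum_empty

lemma MTC_eq_Sval_univ {k : ℕ} (hk : 1 ≤ k) (s : Fin k → ℕ) (z : ℂ) (α : ℝ) :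
    MTC (fun j => (s j : ℂ)) z (fun i => if i = Fin.last k then α else 0)
      = Sval s z α (Finset.univ : Finset (Fin k)) := by
  haveI : NeZero k := ⟨by omega⟩
  set T := {m : Fin (k + 1) → ℕ+ //
      ∑ j ∈ (Finset.univ : Finset (Fin k)), (m j.castSucc : ℕ) =
        (∑ j ∈ (Finset.univ : Finset (Fin k))ᶜ, (m j.castSucc : ℕ)) + (m (Fin.last k) : ℕ)} with hT
  have hpos : ∀ m : Fin k → ℕ+, 0 < ∑ j : Fin k, (m j : ℕ) := by
    intro m
    exact Finset.sum_pos (fun j _ => (m j).pos) ⟨0, Finset.mem_univ 0⟩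
  let e : (Fin k → ℕ+) ≃ T :=
  { toFun := fun m => ⟨Fin.snoc m (Nat.toPNat (∑ j : Fin k, (m j : ℕ)) (hpos m)), by
      simp [Fin.snoc_castSucc, Fin.snoc_last]; rfl⟩
    invFun := fun m => fun j => m.1 j.castSucc
    left_inv := fun m => by
      funext j
      simp [Fin.snoc_castSucc]
    right_inv := fun m => by
      apply Subtype.ext
      funext i
      refine Fin.lastCases ?_ (fun j => ?_) i
      · dsimp only
        rw [Fin.snoc_last]
        have hm := m.2
        simp only [Finset.compl_univ, Finset.sum_empty, zero_add] at hm
        exact Subtype.ext hm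
      · dsimp only
        rw [Fin.snoc_castSucc] }
  rw [MTC, Sval, ← Equiv.tsum_eq e]
  congr 1
  funext m
  have hne : ∀ j : Fin k, j.castSucc ≠ Fin.last k := fun j => (Fin.castSucc_lt_last j).ne
  have he1 : ((e m).1 (Fin.last k) : ℕ) = ∑ j : Fin k, (m j : ℕ) := by
    show ((Fin.snoc m (Nat.toPNat (∑ j : Fin k, (m j : ℕ)) (hpos m)) : Fin (k+1) → ℕ+) (Fin.last k) : ℕ) = _
    rw [Fin.snoc_last]
    rfl
  have he2 : ∀ j : Fin k, (e m).1 j.castSucc = m j := by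
    intro j
    show (Fin.snoc m (Nat.toPNat (∑ j : Fin k, (m j : ℕ)) (hpos m)) : Fin (k+1) → ℕ+) j.castSucc = _
    rw [Fin.snoc_castSucc]
  simp only [he1, he2, if_pos rfl]
  have h0 : ∀ j : Fin k, (if j.castSucc = Fin.last k then α else 0) = 0 := by
    intro j; rw [if_neg (hne j)]
  have hefn0 : efn 0 = 1 := by simp [efn]
  simp only [h0, mul_zero, if_true, hefn0, one_mul]
  have hpow : ∀ j : Fin k, (((m j : ℕ) : ℂ) ^ ((s j : ℕ) : ℂ))⁻¹ = (((m j : ℕ) : ℂ) ^ (s j))⁻¹ := by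
    intro j; rw [Complex.cpow_natCast]
  have hcast : (((∑ j : Fin k, (m j : ℕ)) : ℕ) : ℂ) = ∑ j : Fin k, ((m j : ℕ) : ℂ) := by
    push_cast; ring
  simp only [hpow, hcast]
  rw [Finset.prod_inv_distrib]
  ring

lemma powersetsum {k : ℕ} (s : Finset (Fin k)) :
    ∑ A ∈ s.powerset, (-1:ℂ)^A.card = if s = ∅ then 1 else 0 := by
  have h2 : ((∑ m ∈ s.powerset, (-1:ℤ)^m.card : ℤ) : ℂ)
      = ∑ m ∈ s.powerset, (-1:ℂ)^m.card := by push_cast; rfl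
  rw [← h2, Finset.sum_powerset_neg_one_pow_card]
  split <;> simp

lemma supsum {k : ℕ} (J : Finset (Fin k)) :
    ∑ I ∈ Finset.univ.filter (fun I => J ⊆ I), (-1:ℂ)^I.card
      = if J = Finset.univ then (-1:ℂ)^k else 0 := by
  classical
  have h : ∑ I ∈ Finset.univ.filter (fun I => J ⊆ I), (-1:ℂ)^I.card
      = ∑ A ∈ Jᶜ.powerset, (-1:ℂ)^(A.card + J.card) := by
    refine Finset.sum_nbij' (fun I => I \ J) (fun A => A ∪ J) ?_ ?_ ?_ ?_ ?_
    · intro I hI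
      simp only [Finset.mem_filter, Finset.mem_univ, true_and] at hI
      simp only [Finset.mem_powerset]
      intro x hx
      simp only [Finset.mem_sdiff] at hx
      simp [hx.2]
    · intro A hA
      simp only [Finset.mem_filter, Finset.mem_univ, true_and]
      exact Finset.subset_union_right
    · intro I hI
      simp only [Finset.mem_filter, Finset.mem_univ, true_and] at hI
      exact Finset.sdiff_union_of_subset hI
    · intro A hA
      simp only [Finset.mem_powerset] at hA
      rw [Finset.union_sdiff_right]
      refine Finset.sdiff_eq_self_of_disjoint ?_
      exact Finset.disjoint_left.mpr (fun x hx hxJ =>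
        (Finset.mem_compl.mp (hA hx)) hxJ)
    · intro I hI
      simp only [Finset.mem_filter, Finset.mem_univ, true_and] at hI
      congr 1
      rw [Finset.card_sdiff_of_subset hI]
      have := Finset.card_le_card hI
      omega
  rw [h]
  have : ∀ A ∈ Jᶜ.powerset, (-1:ℂ)^(A.card + J.card) = (-1:ℂ)^J.card * (-1:ℂ)^A.card := by
    intro A _; rw [pow_add]; ring
  rw [Finset.sum_congr rfl this, ← Finset.mul_sum, powersetsum]
  by_cases hJ : J = Finset.univ
  · simp [hJ, Finset.compl_eq_empty_iff, Finset.card_univ]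
  · have : ¬ Jᶜ = ∅ := by rwa [Finset.compl_eq_empty_iff]
    simp [hJ, this]

lemma comb {k : ℕ} (hk : 2 ≤ k) (f : Finset (Fin k) → ℂ) (hf : f ∅ = 0) :
    ∑ I ∈ Finset.univ.filter (fun I : Finset (Fin k) => 2 ≤ I.card),
        ∑ J ∈ I.powerset, (-1 : ℂ) ^ I.card * f J
      = (-1:ℂ)^k * f Finset.univ + ∑ j : Fin k, f {j} := by
  classical
  haveI : NeZero k := ⟨by omega⟩
  rw [Finset.sum_comm' (s' := fun J => Finset.univ.filter (fun I => J ⊆ I ∧ 2 ≤ I.card))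
      (t' := (Finset.univ : Finset (Finset (Fin k))))
      (fun I J => by simp [Finset.mem_powerset, and_comm])]
  have key : ∀ J : Finset (Fin k),
      ∑ I ∈ Finset.univ.filter (fun I => J ⊆ I ∧ 2 ≤ I.card), (-1:ℂ)^I.card * f J
        = (if J = Finset.univ then (-1:ℂ)^k * f Finset.univ else 0)
          + ∑ j : Fin k, (if J = {j} then f {j} else 0) := by
    intro J
    rw [← Finset.sum_mul]
    have hsplit : ∑ I ∈ Finset.univ.filter (fun I => J ⊆ I ∧ 2 ≤ I.card), (-1:ℂ)^I.card
        + ∑ I ∈ Finset.univ.filter (fun I => J ⊆ I ∧ ¬ 2 ≤ I.card), (-1:ℂ)^I.card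
        = if J = Finset.univ then (-1:ℂ)^k else 0 := by
      rw [← supsum J, ← Finset.filter_filter, ← Finset.filter_filter,
        Finset.sum_filter_add_sum_filter_not]
    have huniv_ne : ∀ j : Fin k, (Finset.univ : Finset (Fin k)) ≠ {j} := by
      intro j h
      have := congrArg Finset.card h
      simp only [Finset.card_univ, Fintype.card_fin, Finset.card_singleton] at this
      omega
    by_cases hJu : J = Finset.univ
    · subst hJu
      have hempty : Finset.univ.filter
          (fun I : Finset (Fin k) => Finset.univ ⊆ I ∧ ¬ 2 ≤ I.card) = ∅ := by
        ext I
        simp only [Finset.mem_filter, Finset.mem_univ, true_and, Finset.notMem_empty,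
          iff_false, not_and, not_not]
        intro hI
        have hIu : I = Finset.univ := Finset.univ_subset_iff.mp hI
        subst hIu
        simp only [Finset.card_univ, Fintype.card_fin]
        omega
      rw [hempty, Finset.sum_empty, add_zero] at hsplit
      rw [hsplit, if_pos rfl]
      simp [huniv_ne]
    · by_cases hJ1 : J.card = 1
      · obtain ⟨j0, hj0⟩ := Finset.card_eq_one.mp hJ1
        subst hj0
        have hsingle : Finset.univ.filter
            (fun I : Finset (Fin k) => {j0} ⊆ I ∧ ¬ 2 ≤ I.card) = {({j0} : Finset (Fin k))} := by
          ext I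
          simp only [Finset.mem_filter, Finset.mem_univ, true_and, Finset.mem_singleton]
          constructor
          · rintro ⟨hsub, hcard⟩
            have h1 : ({j0} : Finset (Fin k)).card ≤ I.card := Finset.card_le_card hsub
            simp only [Finset.card_singleton] at h1
            exact (Finset.eq_of_subset_of_card_le hsub (by omega)).symm
          · rintro rfl
            exact ⟨Finset.Subset.refl _, by simp⟩
        rw [hsingle, Finset.sum_singleton, if_neg hJu] at hsplit
        simp only [Finset.card_singleton, pow_one] at hsplit
        have hc : ∑ I ∈ Finset.univ.filter
            (fun I : Finset (Fin k) => {j0} ⊆ I ∧ 2 ≤ I.card), (-1:ℂ)^I.card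
            = 1 := by linear_combination hsplit
        rw [hc, one_mul, if_neg hJu, zero_add]
        simp only [Finset.singleton_inj]
        rw [Finset.sum_ite_eq]
        simp
      · by_cases hJ0 : J = ∅
        · subst hJ0
          rw [hf, mul_zero]
          have h1 : ¬ (∅ : Finset (Fin k)) = Finset.univ := by
            intro h
            have := congrArg Finset.card h
            simp only [Finset.card_empty, Finset.card_univ, Fintype.card_fin] at this
            omega
          have h2 : ∀ j : Fin k, ¬ (∅ : Finset (Fin k)) = {j} := by
            intro j h
            exact (Finset.singleton_ne_empty j) h.symm
          simp [h1, h2]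
        · have hJ2 : 2 ≤ J.card := by
            have := Finset.card_pos.mpr (Finset.nonempty_of_ne_empty hJ0)
            omega
          have hempty : Finset.univ.filter
              (fun I : Finset (Fin k) => J ⊆ I ∧ ¬ 2 ≤ I.card) = ∅ := by
            ext I
            simp only [Finset.mem_filter, Finset.mem_univ, true_and, Finset.notMem_empty,
              iff_false, not_and, not_not]
            intro hI
            have := Finset.card_le_card hI
            omega
          rw [hempty, Finset.sum_empty, add_zero, if_neg hJu] at hsplit
          rw [hsplit, zero_mul, if_neg hJu, zero_add]
          have h2 : ∀ j : Fin k, ¬ J = {j} := by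
            intro j h
            rw [h] at hJ1
            simp at hJ1
          simp [h2]
  rw [Finset.sum_congr rfl (fun J _ => key J), Finset.sum_add_distrib,
    Finset.sum_ite_eq' Finset.univ (Finset.univ : Finset (Fin k))]
  rw [Finset.sum_comm]
  simp only [Finset.sum_ite_eq' Finset.univ]
  simp

theorem stmt12 (k : ℕ) (hk : 2 ≤ k) (s : Fin k → ℕ) (hs : ∀ j, 1 ≤ s j) (α : ℝ)
    (z : ℂ) (hz : 1 ≤ z.re) :
    (-1 : ℂ) ^ (k + ∑ j, s j) *
        MTC (fun j => (s j : ℂ)) z (fun i => if i = Fin.last k then α else 0)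
      + ∑ j : Fin k, (-1 : ℂ) ^ s j * Sval s z α {j}
    = ∑ I ∈ Finset.univ.filter (fun I : Finset (Fin k) => 2 ≤ I.card),
        (-1 : ℂ) ^ I.card *
          ∑ J ∈ I.powerset, (-1 : ℂ) ^ (∑ j ∈ J, s j) * Sval s z α J := by
  classical
  have hR : ∑ I ∈ Finset.univ.filter (fun I : Finset (Fin k) => 2 ≤ I.card),
        (-1 : ℂ) ^ I.card * ∑ J ∈ I.powerset, (-1 : ℂ) ^ (∑ j ∈ J, s j) * Sval s z α J
      = ∑ I ∈ Finset.univ.filter (fun I : Finset (Fin k) => 2 ≤ I.card),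
        ∑ J ∈ I.powerset, (-1 : ℂ) ^ I.card *
          ((-1 : ℂ) ^ (∑ j ∈ J, s j) * Sval s z α J) :=
    Finset.sum_congr rfl (fun I _ => Finset.mul_sum _ _ _)
  rw [hR, comb hk (fun J => (-1 : ℂ) ^ (∑ j ∈ J, s j) * Sval s z α J)
    (by simp [Sval_empty])]
  rw [MTC_eq_Sval_univ (by omega) s z α]
  simp only [Finset.sum_singleton, pow_add]
  ring
end

section
/- For all positive integers a, b, c: ζ_MT(a,b,c) = Σ_{ν=0}^{b−1} C(a+ν−1, ν) ζ(c+a+ν, b−ν) + Σ_{ν=0}^{a−1} C(b+ν−1, ν) ζ(c+b+ν, a−ν), where C denotes the binomial coefficient. -/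
open scoped ENNReal

/-! Auxiliary material -/

noncomputable def T (a b : ℕ) (s y : ℝ) : ℝ :=
  ∑ ν ∈ Finset.range b, ((a + ν - 1).choose ν : ℝ) * (s ^ (a + ν) * y ^ (b - ν))⁻¹

lemma split (A B : ℕ) (x y : ℝ) (hx : 0 < x) (hy : 0 < y) :
    (x ^ (A + 1) * y ^ (B + 1))⁻¹
      = (x + y)⁻¹ * ((x ^ A * y ^ (B + 1))⁻¹ + (x ^ (A + 1) * y ^ B)⁻¹) := by
  have hs : (0:ℝ) < x + y := by linarith
  field_simp
  ring

lemma Trec (A B : ℕ) (s y : ℝ) :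
    T (A + 2) (B + 1) s y = s⁻¹ * (T (A + 1) (B + 1) s y + T (A + 2) B s y) := by
  unfold T
  rw [mul_add, Finset.mul_sum, Finset.mul_sum]
  have h1 : ∀ ν ∈ Finset.range (B + 1),
      s⁻¹ * (((A + 1 + ν - 1).choose ν : ℝ) * (s ^ (A + 1 + ν) * y ^ (B + 1 - ν))⁻¹)
        = ((A + ν).choose ν : ℝ) * (s ^ (A + 2 + ν) * y ^ (B + 1 - ν))⁻¹ := by
    intro ν _
    have : A + 1 + ν - 1 = A + ν := by omega
    rw [this, show A + 2 + ν = (A + 1 + ν) + 1 from by ring, pow_succ]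
    simp only [mul_inv]
    ring
  have h2 : ∀ ν ∈ Finset.range B,
      s⁻¹ * (((A + 2 + ν - 1).choose ν : ℝ) * (s ^ (A + 2 + ν) * y ^ (B - ν))⁻¹)
        = ((A + 1 + ν).choose ν : ℝ) * (s ^ (A + 2 + (ν + 1)) * y ^ (B + 1 - (ν + 1)))⁻¹ := by
    intro ν hν
    have e1 : A + 2 + ν - 1 = A + 1 + ν := by omega
    have e2 : B + 1 - (ν + 1) = B - ν := by omega
    rw [e1, e2, show A + 2 + (ν + 1) = (A + 2 + ν) + 1 from by ring, pow_succ]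
    simp only [mul_inv]
    ring
  rw [Finset.sum_congr rfl h1, Finset.sum_congr rfl h2]
  rw [Finset.sum_range_succ' (fun ν => ((A + 2 + ν - 1).choose ν : ℝ) * (s ^ (A + 2 + ν) * y ^ (B + 1 - ν))⁻¹),
      Finset.sum_range_succ' (fun ν => ((A + ν).choose ν : ℝ) * (s ^ (A + 2 + ν) * y ^ (B + 1 - ν))⁻¹)]
  simp only [add_zero, Nat.add_zero, Nat.choose_zero_right, Nat.cast_one, one_mul,
    Nat.add_sub_cancel]
  conv_rhs => rw [add_right_comm]
  congr 1
  rw [← Finset.sum_add_distrib]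
  apply Finset.sum_congr rfl
  intro k _
  rw [← add_mul]
  congr 1
  have e1 : A + 2 + (k + 1) - 1 = (A + 1 + k) + 1 := by omega
  have e2 : A + (k + 1) = (A + 1 + k) := by omega
  rw [e1, e2, Nat.choose_succ_succ (A + 1 + k) k]
  push_cast
  ring

lemma aux1 (B : ℕ) (x y : ℝ) (hx : 0 < x) (hy : 0 < y) :
    (x ^ 1 * y ^ (B + 1))⁻¹ = T 1 (B + 1) (x + y) y + T (B + 1) 1 (x + y) x := by
  induction B with
  | zero =>
      have hs : (0:ℝ) < x + y := by linarith
      unfold T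
      simp only [Finset.sum_range_one, Nat.choose_zero_right, Nat.cast_one, one_mul, pow_one,
        Nat.add_zero, add_zero, Nat.sub_zero, pow_zero]
      norm_num
      field_simp
  | succ B ih =>
      have hs : (0:ℝ) < x + y := by linarith
      rw [split 0 (B + 1) x y hx hy]
      rw [ih]
      rw [mul_add, mul_add]
      have eT1 : T 1 (B + 1 + 1) (x + y) y
          = (x + y)⁻¹ * (x ^ 0 * y ^ (B + 1 + 1))⁻¹ + (x + y)⁻¹ * T 1 (B + 1) (x + y) y := by
        unfold T
        rw [Finset.sum_range_succ'
          (fun ν => ((1 + ν - 1).choose ν : ℝ) * ((x + y) ^ (1 + ν) * y ^ (B + 2 - ν))⁻¹)]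
        rw [Finset.mul_sum]
        rw [add_comm]
        congr 1
        · simp only [pow_zero, pow_one, mul_inv, one_mul, Nat.sub_zero, Nat.choose_self,
            Nat.cast_one, Nat.add_zero, add_zero, Nat.choose_zero_right]
        · apply Finset.sum_congr rfl
          intro k _
          have e1 : 1 + (k + 1) - 1 = k + 1 := by omega
          have e2 : 1 + k - 1 = k := by omega
          have e3 : B + 2 - (k + 1) = B + 1 - k := by omega
          rw [e1, e2, e3, Nat.choose_self, Nat.choose_self,
            show 1 + (k + 1) = (1 + k) + 1 from by ring, pow_succ]
          simp only [mul_inv]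
          ring
      have eT2 : T (B + 1 + 1) 1 (x + y) x = (x + y)⁻¹ * T (B + 1) 1 (x + y) x := by
        unfold T
        simp only [Finset.sum_range_one, Nat.add_zero, Nat.add_sub_cancel, Nat.choose_zero_right,
          Nat.cast_one, one_mul, pow_succ]
        simp only [mul_inv]
        ring
      rw [eT1, eT2]
      ring

lemma Trec' (A B : ℕ) (s y : ℝ) :
    T (A + 2) (B + 2) s y = s⁻¹ * (T (A + 1) (B + 2) s y + T (A + 2) (B + 1) s y) := by
  have h := Trec A (B + 1) s y
  rwa [show B + 1 + 1 = B + 2 from by omega] at h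

lemma PF : ∀ a b : ℕ, ∀ x y : ℝ, 0 < x → 0 < y →
    (x ^ (a + 1) * y ^ (b + 1))⁻¹
      = T (a + 1) (b + 1) (x + y) y + T (b + 1) (a + 1) (x + y) x := by
  intro a
  induction a with
  | zero => intro b x y hx hy; exact aux1 b x y hx hy
  | succ A ihA =>
      intro b
      induction b with
      | zero =>
          intro x y hx hy
          have h := aux1 (A + 1) y x hy hx
          rw [add_comm y x] at h
          rw [mul_comm] at h
          rw [h]
          ring
      | succ B ihB =>
          intro x y hx hy
          rw [split (A + 1) (B + 1) x y hx hy, ihA (B + 1) x y hx hy, ihB x y hx hy]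
          rw [show A + 1 + 1 = A + 2 from by omega, show B + 1 + 1 = B + 2 from by omega]
          rw [Trec' A B (x + y) y, Trec' B A (x + y) x]
          ring

lemma PF' (a b c : ℕ) (ha : 1 ≤ a) (hb : 1 ≤ b) (x y : ℝ) (hx : 0 < x) (hy : 0 < y) :
    (x ^ a * y ^ b)⁻¹ * ((x + y) ^ c)⁻¹
      = (∑ ν ∈ Finset.range b, ((a + ν - 1).choose ν : ℝ)
            * ((x + y) ^ (c + a + ν) * y ^ (b - ν))⁻¹)
        + ∑ ν ∈ Finset.range a, ((b + ν - 1).choose ν : ℝ)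
            * ((y + x) ^ (c + b + ν) * x ^ (a - ν))⁻¹ := by
  obtain ⟨A, rfl⟩ : ∃ A, a = A + 1 := ⟨a - 1, by omega⟩
  obtain ⟨B, rfl⟩ : ∃ B, b = B + 1 := ⟨b - 1, by omega⟩
  rw [add_comm y x]
  rw [PF A B x y hx hy, add_mul]
  unfold T
  rw [Finset.sum_mul, Finset.sum_mul]
  generalize x + y = s
  congr 1
  · apply Finset.sum_congr rfl
    intro ν _
    rw [show c + (A + 1) + ν = (A + 1 + ν) + c from by ring, pow_add]
    simp only [mul_inv]
    ring
  · apply Finset.sum_congr rfl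
    intro ν _
    rw [show c + (B + 1) + ν = (B + 1 + ν) + c from by ring, pow_add]
    simp only [mul_inv]
    ring

lemma tsum_eq_toReal_ofReal {α : Type*} {f : α → ℝ} (hf : ∀ x, 0 ≤ f x) :
    ∑' x, f x = (∑' x, ENNReal.ofReal (f x)).toReal := by
  by_cases h : Summable f
  · rw [← ENNReal.ofReal_tsum_of_nonneg hf h, ENNReal.toReal_ofReal (tsum_nonneg hf)]
  · rw [tsum_eq_zero_of_not_summable h]
    have hT : ∑' x, ENNReal.ofReal (f x) = ⊤ := by
      by_contra hT
      exact h (((ENNReal.summable_toReal hT).congr fun x => ENNReal.toReal_ofReal (hf x)))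
    rw [hT]
    simp

def eAdd : ℕ+ × ℕ+ ≃ {x : ℕ+ × ℕ+ // x.2 < x.1} where
  toFun p := ⟨(p.1 + p.2, p.2), by
    have : (p.2 : ℕ) < ((p.1 + p.2 : ℕ+) : ℕ) := by
      simp [PNat.add_coe]
    exact this⟩
  invFun x := (⟨(x.1.1 : ℕ) - (x.1.2 : ℕ), by
      have := x.2
      rw [← PNat.coe_lt_coe] at this
      omega⟩, x.1.2)
  left_inv p := by
    refine Prod.ext ?_ rfl
    apply PNat.coe_injective
    simp [PNat.add_coe]
  right_inv x := by
    apply Subtype.ext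
    have h := x.2
    rw [← PNat.coe_lt_coe] at h
    refine Prod.ext ?_ rfl
    apply PNat.coe_injective
    simp only [PNat.add_coe, PNat.mk_coe]
    show ((x.1.1:ℕ) - x.1.2) + (x.1.2:ℕ) = x.1.1
    omega

lemma summable_aux (p q : ℕ) (hp : 2 ≤ p) (hq : 1 ≤ q) :
    Summable (fun x : {x : ℕ+ × ℕ+ // x.2 < x.1} =>
      (((x.1.1 : ℕ) : ℝ) ^ p * ((x.1.2 : ℕ) : ℝ) ^ q)⁻¹) := by
  have h32 : Summable (fun n : ℕ+ => (((n : ℕ) : ℝ) ^ ((3:ℝ)/2))⁻¹) := by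
    have h := Real.summable_nat_rpow_inv.mpr (by norm_num : (1:ℝ) < 3/2)
    exact h.comp_injective PNat.coe_injective
  have hprod : Summable (fun x : ℕ+ × ℕ+ =>
      (((x.1 : ℕ) : ℝ) ^ ((3:ℝ)/2))⁻¹ * (((x.2 : ℕ) : ℝ) ^ ((3:ℝ)/2))⁻¹) :=
    h32.mul_of_nonneg h32 (fun n => by positivity) (fun n => by positivity)
  have hsub : Summable (fun x : {x : ℕ+ × ℕ+ // x.2 < x.1} =>
      (((x.1.1 : ℕ) : ℝ) ^ ((3:ℝ)/2))⁻¹ * (((x.1.2 : ℕ) : ℝ) ^ ((3:ℝ)/2))⁻¹) :=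
    hprod.subtype {x | x.2 < x.1}
  apply Summable.of_nonneg_of_le (fun x => by positivity) _ hsub
  intro x
  obtain ⟨⟨M, n⟩, hlt⟩ := x
  have hMn : (n : ℕ) < (M : ℕ) := hlt
  have hM1 : (1:ℝ) ≤ ((M : ℕ) : ℝ) := by exact_mod_cast M.2
  have hn1 : (1:ℝ) ≤ ((n : ℕ) : ℝ) := by exact_mod_cast n.2
  have hnM : ((n : ℕ) : ℝ) ≤ ((M : ℕ) : ℝ) := by exact_mod_cast hMn.le
  set Mr := ((M : ℕ) : ℝ)
  set nr := ((n : ℕ) : ℝ)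
  have hMr : (0:ℝ) < Mr := by linarith
  have hnr : (0:ℝ) < nr := by linarith
  rw [← mul_inv]
  apply inv_anti₀ (by positivity)
  calc Mr ^ ((3:ℝ)/2) * nr ^ ((3:ℝ)/2)
      = (Mr * Mr ^ ((1:ℝ)/2)) * (nr * nr ^ ((1:ℝ)/2)) := by
        rw [show (3:ℝ)/2 = 1 + 1/2 by norm_num, Real.rpow_add hMr, Real.rpow_add hnr,
          Real.rpow_one, Real.rpow_one]
    _ ≤ (Mr * Mr ^ ((1:ℝ)/2)) * (nr * Mr ^ ((1:ℝ)/2)) := by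
        have hle : nr ^ ((1:ℝ)/2) ≤ Mr ^ ((1:ℝ)/2) :=
          Real.rpow_le_rpow hnr.le hnM (by norm_num)
        gcongr
    _ = Mr ^ (2:ℕ) * nr := by
        have hm : Mr ^ ((1:ℝ)/2) * Mr ^ ((1:ℝ)/2) = Mr := by
          rw [← Real.rpow_add hMr]; norm_num
        linear_combination (Mr * nr) * hm
    _ ≤ Mr ^ p * nr ^ q := by
        have h1 : Mr ^ (2:ℕ) ≤ Mr ^ p := pow_le_pow_right₀ hM1 hp
        have h2 : nr ^ (1:ℕ) ≤ nr ^ q := pow_le_pow_right₀ hn1 hq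
        rw [pow_one] at h2
        exact mul_le_mul h1 h2 hnr.le (pow_nonneg hMr.le p)

noncomputable def Wp (p q : ℕ) : ℝ≥0∞ :=
  ∑' x : {x : ℕ+ × ℕ+ // x.2 < x.1},
    ENNReal.ofReal ((((x.1.1 : ℕ) : ℝ) ^ p * ((x.1.2 : ℕ) : ℝ) ^ q)⁻¹)

lemma Wp_ne_top (p q : ℕ) (hp : 2 ≤ p) (hq : 1 ≤ q) : Wp p q ≠ ⊤ := by
  rw [Wp, ← ENNReal.ofReal_tsum_of_nonneg (fun x => by positivity) (summable_aux p q hp hq)]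
  exact ENNReal.ofReal_ne_top

lemma Wp_eq (p q : ℕ) :
    ∑' x : ℕ+ × ℕ+, ENNReal.ofReal
        ((((((x.1 : ℕ) : ℝ)) + (((x.2 : ℕ) : ℝ))) ^ p * (((x.2 : ℕ) : ℝ)) ^ q)⁻¹)
      = Wp p q := by
  rw [Wp, ← Equiv.tsum_eq eAdd]
  apply tsum_congr
  intro x
  congr 3
  simp [eAdd, PNat.add_coe]


/-- The Mordell–Tornheim zeta value `ζ_MT(s₁,…,s_{k+1})` of depth `k`. -/
noncomputable def MTZ {k : ℕ} (s : Fin (k + 1) → ℕ) : ℝ :=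
  ∑' m : Fin k → ℕ+,
    (∏ j : Fin k, ((m j : ℕ) : ℝ) ^ s j.castSucc)⁻¹ *
      ((∑ j : Fin k, ((m j : ℕ) : ℝ)) ^ s (Fin.last k))⁻¹

/-- The multiple zeta value `ζ(n₁,…,n_d)` (summed over `m₁ > m₂ > ⋯ > m_d ≥ 1`). -/
noncomputable def MZV {d : ℕ} (n : Fin d → ℕ) : ℝ :=
  ∑' m : {m : Fin d → ℕ+ // ∀ i j : Fin d, i < j → m j < m i},
    (∏ i : Fin d, ((m.1 i : ℕ) : ℝ) ^ n i)⁻¹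


def E2 : {x : ℕ+ × ℕ+ // x.2 < x.1} ≃ {m : Fin 2 → ℕ+ // ∀ i j : Fin 2, i < j → m j < m i} where
  toFun x := ⟨![x.1.1, x.1.2], by
    intro i j hij
    fin_cases i <;> fin_cases j <;> simp_all <;> exact x.2⟩
  invFun m := ⟨(m.1 0, m.1 1), m.2 0 1 (by decide)⟩
  left_inv x := by ext <;> rfl
  right_inv m := by
    apply Subtype.ext
    funext i
    fin_cases i <;> rfl

lemma MZV_eq (p q : ℕ) : MZV (d := 2) ![p, q] = (Wp p q).toReal := by
  have h : MZV (d := 2) ![p, q]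
      = ∑' x : {x : ℕ+ × ℕ+ // x.2 < x.1},
          (((x.1.1 : ℕ) : ℝ) ^ p * ((x.1.2 : ℕ) : ℝ) ^ q)⁻¹ := by
    rw [MZV, ← Equiv.tsum_eq E2]
    apply tsum_congr
    intro x
    simp [E2, Fin.prod_univ_two]
  rw [h, Wp]
  exact tsum_eq_toReal_ofReal (fun x => by positivity)

lemma key (a b c : ℕ) (ha : 1 ≤ a) (hb : 1 ≤ b) :
    ∑' x : ℕ+ × ℕ+, ENNReal.ofReal
        ((((x.1 : ℕ) : ℝ) ^ a * ((x.2 : ℕ) : ℝ) ^ b)⁻¹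
          * ((((x.1 : ℕ) : ℝ) + ((x.2 : ℕ) : ℝ)) ^ c)⁻¹)
      = (∑ ν ∈ Finset.range b, ((a + ν - 1).choose ν : ℝ≥0∞) * Wp (c + a + ν) (b - ν))
        + ∑ ν ∈ Finset.range a, ((b + ν - 1).choose ν : ℝ≥0∞) * Wp (c + b + ν) (a - ν) := by
  have step1 : ∀ x : ℕ+ × ℕ+, ENNReal.ofReal
        ((((x.1 : ℕ) : ℝ) ^ a * ((x.2 : ℕ) : ℝ) ^ b)⁻¹
          * ((((x.1 : ℕ) : ℝ) + ((x.2 : ℕ) : ℝ)) ^ c)⁻¹)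
      = (∑ ν ∈ Finset.range b, ((a + ν - 1).choose ν : ℝ≥0∞)
            * ENNReal.ofReal (((((x.1 : ℕ) : ℝ) + ((x.2 : ℕ) : ℝ)) ^ (c + a + ν)
                * ((x.2 : ℕ) : ℝ) ^ (b - ν))⁻¹))
        + ∑ ν ∈ Finset.range a, ((b + ν - 1).choose ν : ℝ≥0∞)
            * ENNReal.ofReal (((((x.2 : ℕ) : ℝ) + ((x.1 : ℕ) : ℝ)) ^ (c + b + ν)
                * ((x.1 : ℕ) : ℝ) ^ (a - ν))⁻¹) := by
    intro x
    have hx1 : (0:ℝ) < ((x.1 : ℕ) : ℝ) := by exact_mod_cast x.1.2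
    have hx2 : (0:ℝ) < ((x.2 : ℕ) : ℝ) := by exact_mod_cast x.2.2
    rw [PF' a b c ha hb _ _ hx1 hx2]
    rw [ENNReal.ofReal_add (Finset.sum_nonneg fun ν _ => by positivity)
        (Finset.sum_nonneg fun ν _ => by positivity)]
    rw [ENNReal.ofReal_sum_of_nonneg (fun ν _ => by positivity),
        ENNReal.ofReal_sum_of_nonneg (fun ν _ => by positivity)]
    congr 1 <;> apply Finset.sum_congr rfl <;> intro ν _ <;>
      rw [ENNReal.ofReal_mul (by positivity), ENNReal.ofReal_natCast]
  rw [tsum_congr step1, ENNReal.tsum_add]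
  congr 1
  · rw [Summable.tsum_finsetSum (fun ν _ => ENNReal.summable)]
    apply Finset.sum_congr rfl
    intro ν _
    rw [ENNReal.tsum_mul_left, Wp_eq]
  · rw [Summable.tsum_finsetSum (fun ν _ => ENNReal.summable)]
    apply Finset.sum_congr rfl
    intro ν _
    rw [ENNReal.tsum_mul_left]
    congr 1
    rw [← Wp_eq (c + b + ν) (a - ν), ← Equiv.tsum_eq (Equiv.prodComm ℕ+ ℕ+)]
    rfl

theorem stmt13 (a b c : ℕ) (ha : 1 ≤ a) (hb : 1 ≤ b) (hc : 1 ≤ c) :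
    MTZ (k := 2) ![a, b, c]
      = ∑ ν ∈ Finset.range b, ((a + ν - 1).choose ν : ℝ) * MZV (d := 2) ![c + a + ν, b - ν]
        + ∑ ν ∈ Finset.range a, ((b + ν - 1).choose ν : ℝ) * MZV (d := 2) ![c + b + ν, a - ν] := by
  have hMTZ : MTZ (k := 2) ![a, b, c]
      = (∑' x : ℕ+ × ℕ+, ENNReal.ofReal
          ((((x.1 : ℕ) : ℝ) ^ a * ((x.2 : ℕ) : ℝ) ^ b)⁻¹
            * ((((x.1 : ℕ) : ℝ) + ((x.2 : ℕ) : ℝ)) ^ c)⁻¹)).toReal := by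
    have h : MTZ (k := 2) ![a, b, c]
        = ∑' x : ℕ+ × ℕ+, (((x.1 : ℕ) : ℝ) ^ a * ((x.2 : ℕ) : ℝ) ^ b)⁻¹
            * ((((x.1 : ℕ) : ℝ) + ((x.2 : ℕ) : ℝ)) ^ c)⁻¹ := by
      rw [MTZ, ← Equiv.tsum_eq (finTwoArrowEquiv ℕ+).symm]
      apply tsum_congr
      intro x
      simp [Fin.prod_univ_two, Fin.sum_univ_two, Fin.last]
    rw [h]
    exact tsum_eq_toReal_ofReal (fun x => by positivity)
  rw [hMTZ, key a b c ha hb]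
  have hW1 : ∀ ν ∈ Finset.range b,
      ((a + ν - 1).choose ν : ℝ≥0∞) * Wp (c + a + ν) (b - ν) ≠ ⊤ := by
    intro ν hν
    exact ENNReal.mul_ne_top (ENNReal.natCast_ne_top _)
      (Wp_ne_top _ _ (by omega) (by simp at hν; omega))
  have hW2 : ∀ ν ∈ Finset.range a,
      ((b + ν - 1).choose ν : ℝ≥0∞) * Wp (c + b + ν) (a - ν) ≠ ⊤ := by
    intro ν hν
    exact ENNReal.mul_ne_top (ENNReal.natCast_ne_top _)
      (Wp_ne_top _ _ (by omega) (by simp at hν; omega))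
  rw [ENNReal.toReal_add (ENNReal.sum_ne_top.2 hW1) (ENNReal.sum_ne_top.2 hW2),
      ENNReal.toReal_sum hW1, ENNReal.toReal_sum hW2]
  congr 1 <;> apply Finset.sum_congr rfl <;> intro ν _ <;>
    rw [ENNReal.toReal_mul, ENNReal.toReal_natCast, MZV_eq]
end

section
/- Let k ≥ 1, let s_1,…,s_k be positive integers, let s_{k+1} ∈ ℂ with Re(s_{k+1}) ≥ 1, and let I be a nonempty subset of {1,…,k}. Then the family (m_1,…,m_{k+1}) ↦ 1/(m_1^{s_1} ⋯ m_k^{s_k} m_{k+1}^{s_{k+1}}), indexed by tuples of positive integers (m_1,…,m_{k+1}) satisfying Σ_{j∈I} m_j = Σ_{j∈{1,…,k+1}∖I} m_j, is absolutely summable, i.e., the series Σ 1/(m_1^{s_1} ⋯ m_k^{s_k} m_{k+1}^{Re(s_{k+1})}) over this index set converges. -/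
open Finset

lemma aux_pnat_rpow {e : ℝ} (he : 1 < e) :
    Summable (fun n : ℕ+ => ((n : ℕ) : ℝ) ^ (-e)) := by
  have h : Summable (fun n : ℕ => (n : ℝ) ^ (-e)) :=
    Real.summable_nat_rpow.2 (by linarith)
  exact h.comp_injective PNat.coe_injective

lemma aux_pi_fin : ∀ (n : ℕ) (h : Fin n → ℕ+ → ℝ), (∀ i x, 0 ≤ h i x) →
    (∀ i, Summable (h i)) → Summable (fun m : Fin n → ℕ+ => ∏ i, h i (m i)) := by
  intro n
  induction n with
  | zero => intro h _ _; exact Summable.of_finite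
  | succ n ih =>
    intro h h0 hs
    have hg : Summable (fun m : Fin n → ℕ+ => ∏ i, h i.succ (m i)) :=
      ih (fun i => h i.succ) (fun i x => h0 _ _) (fun i => hs _)
    have a1 : (0 : ℕ+ → ℝ) ≤ h 0 := fun x => h0 0 x
    have a2 : (0 : (Fin n → ℕ+) → ℝ) ≤ (fun m : Fin n → ℕ+ => ∏ i, h i.succ (m i)) :=
      fun m => Finset.prod_nonneg fun i _ => h0 _ _
    have h2 := Summable.mul_of_nonneg (hs 0) hg a1 a2
    have h3 := h2.comp_injective (Fin.consEquiv (fun _ => ℕ+)).symm.injective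
    convert h3 using 1
    · rfl
    funext m
    simp [Fin.consEquiv, Fin.prod_univ_succ, Function.comp, Fin.tail]

lemma aux_pi {ι : Type*} [Fintype ι] (h : ι → ℕ+ → ℝ) (h0 : ∀ i x, 0 ≤ h i x)
    (hs : ∀ i, Summable (h i)) : Summable (fun m : ι → ℕ+ => ∏ i, h i (m i)) := by
  have e := Fintype.equivFin ι
  have h1 : Summable (fun m' : Fin (Fintype.card ι) → ℕ+ => ∏ j, h (e.symm j) (m' j)) :=
    aux_pi_fin _ _ (fun i x => h0 _ _) (fun i => hs _)
  have h2 := h1.comp_injective (Equiv.piCongrLeft' (fun _ => ℕ+) e).injective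
  convert h2 using 1
  · rfl
  funext m
  exact (Equiv.prod_comp e.symm (fun i => h i (m i))).symm

theorem stmt19 (k : ℕ) (hk : 1 ≤ k) (s : Fin k → ℕ) (hs : ∀ j, 1 ≤ s j)
    (z : ℂ) (hz : 1 ≤ z.re) (I : Finset (Fin k)) (hI : I.Nonempty) :
    Summable (fun m : {m : Fin (k + 1) → ℕ+ //
        ∑ j ∈ I, (m j.castSucc : ℕ)
          = (∑ j ∈ Iᶜ, (m j.castSucc : ℕ)) + (m (Fin.last k) : ℕ)} =>
      (∏ j : Fin k, ((m.1 j.castSucc : ℕ) : ℝ) ^ s j)⁻¹ *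
        (((m.1 (Fin.last k) : ℕ) : ℝ) ^ z.re)⁻¹) := by
  classical
  set ε : ℝ := 1 / (2 * k) with hεdef
  have hk1 : (1:ℝ) ≤ (k:ℝ) := by exact_mod_cast hk
  have hε0 : 0 < ε := by rw [hεdef]; exact div_pos one_pos (by linarith)
  have hεk : (k:ℝ) * ε = 1/2 := by rw [hεdef]; field_simp
  -- the index subtype
  set X := {m : Fin (k + 1) → ℕ+ //
        ∑ j ∈ I, (m j.castSucc : ℕ)
          = (∑ j ∈ Iᶜ, (m j.castSucc : ℕ)) + (m (Fin.last k) : ℕ)} with hX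
  -- a fixed companion index
  have h01 : (0:ℕ) < k + 1 := by omega
  have h11 : (1:ℕ) < k + 1 := by omega
  set q : Fin (k+1) → Fin (k+1) := fun p =>
    if p = ⟨0, h01⟩ then ⟨1, h11⟩ else ⟨0, h01⟩ with hqdef
  have hq : ∀ p, q p ≠ p := by
    intro p
    by_cases hp : p = ⟨0, h01⟩
    · rw [hqdef]; simp only [hp, if_pos rfl]
      intro hcon; rw [Fin.ext_iff] at hcon; simp at hcon
    · rw [hqdef]; simp only [if_neg hp]
      exact fun hcon => hp hcon.symm
  -- the max coordinate
  have hPex : ∀ m : X, ∃ p, ∀ j, m.1 j ≤ m.1 p := fun m => Finite.exists_max (fun j => m.1 j)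
  set P : X → Fin (k+1) := fun m => (hPex m).choose with hPdef
  have hP : ∀ (m : X) (j : Fin (k+1)), (m.1 j : ℕ) ≤ (m.1 (P m) : ℕ) := by
    intro m j; exact_mod_cast (hPex m).choose_spec j
  -- the common sum
  set S : X → ℕ := fun m => ∑ j ∈ I, ((m.1 j.castSucc : ℕ)) with hSdef
  have hS1 : ∀ m : X, 1 ≤ S m := by
    intro m
    obtain ⟨i, hi⟩ := hI
    calc 1 ≤ (m.1 i.castSucc : ℕ) := (m.1 i.castSucc).one_le
    _ ≤ S m := Finset.single_le_sum (f := fun j => ((m.1 j.castSucc : ℕ)))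
        (fun j _ => Nat.zero_le _) hi
  have hcoord : ∀ (m : X) (j : Fin (k+1)), (m.1 j : ℕ) ≤ S m := by
    intro m j
    induction j using Fin.lastCases with
    | last =>
      rw [hSdef]; simp only []
      rw [m.2]; exact Nat.le_add_left _ _
    | cast i =>
      by_cases hiI : i ∈ I
      · exact Finset.single_le_sum (f := fun j => ((m.1 j.castSucc : ℕ)))
          (fun j _ => Nat.zero_le _) hiI
      · have h1 : (m.1 i.castSucc : ℕ) ≤ ∑ j ∈ Iᶜ, (m.1 j.castSucc : ℕ) :=
          Finset.single_le_sum (f := fun j => ((m.1 j.castSucc : ℕ)))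
            (fun j _ => Nat.zero_le _) (Finset.mem_compl.2 hiI)
        have h2 : (∑ j ∈ Iᶜ, ((m.1 j.castSucc : ℕ))) ≤ S m := by
          rw [hSdef]; simp only []; rw [m.2]; exact Nat.le_add_right _ _
        exact h1.trans h2
  have hSP : ∀ m : X, S m ≤ (k+1) * (m.1 (P m) : ℕ) := by
    intro m
    calc S m ≤ ∑ _j ∈ I, (m.1 (P m) : ℕ) := Finset.sum_le_sum (fun j _ => hP m _)
    _ = I.card * (m.1 (P m) : ℕ) := by rw [Finset.sum_const, smul_eq_mul]
    _ ≤ (k+1) * (m.1 (P m) : ℕ) := by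
        apply Nat.mul_le_mul_right
        have := I.card_le_univ
        simp only [Finset.card_univ, Fintype.card_fin] at this
        omega
  -- exponents
  set e : Fin (k+1) → Fin (k+1) → ℝ := fun p j =>
    if j = p then 2 else (1+ε) + (if j = q p then 1/2 else 0) with hedef
  have he1 : ∀ p j, 1 < e p j := by
    intro p j
    rw [hedef]; simp only []
    split
    · norm_num
    · split <;> linarith
  -- dominating function
  set g : (Fin (k+1)) × (Fin (k+1) → ℕ+) → ℝ :=
    fun x => ((k:ℝ)+1) * ∏ j, ((x.2 j : ℕ) : ℝ) ^ (-(e x.1 j)) with hgdef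
  have hgsum : Summable g := by
    have base : ∀ p : Fin (k+1),
        Summable (fun n : Fin (k+1) → ℕ+ => ∏ j, ((n j : ℕ) : ℝ) ^ (-(e p j))) :=
      fun p => aux_pi (fun j x => ((x : ℕ) : ℝ) ^ (-(e p j)))
        (fun j x => Real.rpow_nonneg (Nat.cast_nonneg _) _)
        (fun j => aux_pnat_rpow (he1 p j))
    have hF : Summable (fun x : (Fin (k+1)) × (Fin (k+1) → ℕ+) =>
        ∏ j, ((x.2 j : ℕ) : ℝ) ^ (-(e x.1 j))) := by
      refine (summable_prod_of_nonneg ?_).2 ⟨fun p => base p, Summable.of_finite⟩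
      exact fun x => Finset.prod_nonneg fun j _ => Real.rpow_nonneg (Nat.cast_nonneg _) _
    exact hF.mul_left _
  -- the injection
  set Ψ : X → (Fin (k+1)) × (Fin (k+1) → ℕ+) :=
    fun m => (P m, Function.update m.1 (P m) 1) with hΨdef
  have hΨ : Function.Injective Ψ := by
    intro m m' heq
    rw [hΨdef] at heq
    simp only [Prod.mk.injEq] at heq
    obtain ⟨hp, hu⟩ := heq
    have hne : ∀ j, j ≠ P m → m.1 j = m'.1 j := by
      intro j hj
      have h1 := congrFun hu j
      rw [Function.update_of_ne hj, Function.update_of_ne (by rw [← hp]; exact hj)] at h1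
      exact h1
    have key : ∀ (J : Finset (Fin k)), (∀ j ∈ J, j.castSucc ≠ P m) →
        ∑ j ∈ J, ((m.1 j.castSucc : ℕ)) = ∑ j ∈ J, ((m'.1 j.castSucc : ℕ)) :=
      fun J hJ => Finset.sum_congr rfl (fun j hj => by rw [hne _ (hJ j hj)])
    have hgoal : m.1 (P m) = m'.1 (P m) := by
      have Cm := m.2
      have Cm' := m'.2
      rcases Fin.eq_castSucc_or_eq_last (P m) with ⟨i, hi⟩ | hlast
      · have hlasteq : (m.1 (Fin.last k) : ℕ) = (m'.1 (Fin.last k) : ℕ) := by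
          rw [hne _ (by rw [hi]; exact (Fin.castSucc_lt_last i).ne')]
        by_cases hiI : i ∈ I
        · have hc : ∑ j ∈ Iᶜ, ((m.1 j.castSucc : ℕ)) = ∑ j ∈ Iᶜ, ((m'.1 j.castSucc : ℕ)) := by
            apply key
            intro j hj
            rw [hi]
            intro hcon
            exact (Finset.mem_compl.1 hj) (by rwa [Fin.castSucc_inj.1 hcon])
          have hIeq : ∑ j ∈ I, ((m.1 j.castSucc : ℕ)) = ∑ j ∈ I, ((m'.1 j.castSucc : ℕ)) := by
            rw [Cm, Cm', hc, hlasteq]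
          have hrest : ∑ j ∈ I.erase i, ((m.1 j.castSucc : ℕ))
              = ∑ j ∈ I.erase i, ((m'.1 j.castSucc : ℕ)) := by
            apply Finset.sum_congr rfl
            intro j hj
            rw [hne _ ?_]
            rw [hi]
            intro hcon
            exact (Finset.mem_erase.1 hj).1 (Fin.castSucc_inj.1 hcon)
          rw [← Finset.add_sum_erase _ _ hiI, ← Finset.add_sum_erase _ _ hiI, hrest] at hIeq
          have hfin : (m.1 i.castSucc : ℕ) = (m'.1 i.castSucc : ℕ) := by omega
          rw [hi]
          exact PNat.coe_injective hfin
        · have hmem : i ∈ Iᶜ := Finset.mem_compl.2 hiI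
          have hIeq : ∑ j ∈ I, ((m.1 j.castSucc : ℕ)) = ∑ j ∈ I, ((m'.1 j.castSucc : ℕ)) := by
            apply key
            intro j hj
            rw [hi]
            intro hcon
            exact hiI (by rwa [Fin.castSucc_inj.1 hcon] at hj)
          have hCeq : ∑ j ∈ Iᶜ, ((m.1 j.castSucc : ℕ)) = ∑ j ∈ Iᶜ, ((m'.1 j.castSucc : ℕ)) := by
            omega
          have hrest : ∑ j ∈ Iᶜ.erase i, ((m.1 j.castSucc : ℕ))
              = ∑ j ∈ Iᶜ.erase i, ((m'.1 j.castSucc : ℕ)) := by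
            apply Finset.sum_congr rfl
            intro j hj
            rw [hne _ ?_]
            rw [hi]
            intro hcon
            exact (Finset.mem_erase.1 hj).1 (Fin.castSucc_inj.1 hcon)
          rw [← Finset.add_sum_erase _ _ hmem, ← Finset.add_sum_erase _ _ hmem, hrest] at hCeq
          have hfin : (m.1 i.castSucc : ℕ) = (m'.1 i.castSucc : ℕ) := by omega
          rw [hi]
          exact PNat.coe_injective hfin
      · have hIeq : ∑ j ∈ I, ((m.1 j.castSucc : ℕ)) = ∑ j ∈ I, ((m'.1 j.castSucc : ℕ)) := by
          apply key
          intro j hj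
          rw [hlast]
          exact (Fin.castSucc_lt_last j).ne
        have hCeq : ∑ j ∈ Iᶜ, ((m.1 j.castSucc : ℕ)) = ∑ j ∈ Iᶜ, ((m'.1 j.castSucc : ℕ)) := by
          apply key
          intro j hj
          rw [hlast]
          exact (Fin.castSucc_lt_last j).ne
        have hfin : (m.1 (Fin.last k) : ℕ) = (m'.1 (Fin.last k) : ℕ) := by omega
        rw [hlast]
        exact PNat.coe_injective hfin
    apply Subtype.ext
    funext j
    by_cases hj : j = P m
    · rw [hj]; exact hgoal
    · exact hne j hj
  have hb : ∀ m : X,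
      (∏ j : Fin k, ((m.1 j.castSucc : ℕ) : ℝ) ^ s j)⁻¹ *
        (((m.1 (Fin.last k) : ℕ) : ℝ) ^ z.re)⁻¹ ≤ g (Ψ m) := by
    intro m
    have hc1 : ∀ j : Fin (k+1), (1:ℝ) ≤ ((m.1 j : ℕ) : ℝ) := by
      intro j; exact_mod_cast (m.1 j).one_le
    have hc0 : ∀ j : Fin (k+1), (0:ℝ) < ((m.1 j : ℕ) : ℝ) :=
      fun j => zero_lt_one.trans_le (hc1 j)
    have hSr1 : (1:ℝ) ≤ ((S m : ℕ) : ℝ) := by exact_mod_cast hS1 m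
    have hSr0 : (0:ℝ) < ((S m : ℕ) : ℝ) := zero_lt_one.trans_le hSr1
    have hcS : ∀ j : Fin (k+1), ((m.1 j : ℕ) : ℝ) ≤ ((S m : ℕ) : ℝ) := by
      intro j; exact_mod_cast hcoord m j
    have hSrP : ((S m : ℕ) : ℝ) ≤ ((k:ℝ)+1) * ((m.1 (P m) : ℕ) : ℝ) := by
      have := hSP m
      push_cast
      exact_mod_cast this
    -- rewrite g (Ψ m)
    have hgΨ : g (Ψ m) = ((k:ℝ)+1) * ∏ j ∈ Finset.univ.erase (P m),
        ((m.1 j : ℕ) : ℝ) ^ (-((1+ε) + if j = q (P m) then (1/2:ℝ) else 0)) := by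
      rw [hgdef, hΨdef]
      simp only []
      congr 1
      rw [← Finset.mul_prod_erase _ _ (Finset.mem_univ (P m))]
      rw [Function.update_self]
      rw [show (((1:ℕ+):ℕ):ℝ) = 1 by norm_num, Real.one_rpow, one_mul]
      apply Finset.prod_congr rfl
      intro j hj
      rw [Function.update_of_ne (Finset.mem_erase.1 hj).1]
      congr 1
      rw [hedef]
      simp only []
      rw [if_neg (Finset.mem_erase.1 hj).1]
    have hA : (∏ j : Fin k, ((m.1 j.castSucc : ℕ) : ℝ) ^ s j)⁻¹ *
        (((m.1 (Fin.last k) : ℕ) : ℝ) ^ z.re)⁻¹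
        ≤ ∏ j : Fin (k+1), (((m.1 j : ℕ) : ℝ))⁻¹ := by
      rw [Fin.prod_univ_castSucc (f := fun j : Fin (k+1) => (((m.1 j : ℕ) : ℝ))⁻¹)]
      have a1 : (∏ j : Fin k, ((m.1 j.castSucc : ℕ) : ℝ) ^ s j)⁻¹
          ≤ ∏ j : Fin k, (((m.1 j.castSucc : ℕ) : ℝ))⁻¹ := by
        calc (∏ j : Fin k, ((m.1 j.castSucc : ℕ) : ℝ) ^ s j)⁻¹
            ≤ (∏ j : Fin k, ((m.1 j.castSucc : ℕ) : ℝ))⁻¹ := by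
              apply inv_anti₀
              · apply Finset.prod_pos; intro j _; exact hc0 _
              · apply Finset.prod_le_prod
                · intro j _; exact (hc0 _).le
                · intro j _
                  exact le_self_pow₀ (hc1 _) (Nat.one_le_iff_ne_zero.1 (hs j))
        _ = ∏ j : Fin k, (((m.1 j.castSucc : ℕ) : ℝ))⁻¹ := (Finset.prod_inv_distrib _).symm
      have a2 : ((((m.1 (Fin.last k) : ℕ) : ℝ)) ^ z.re)⁻¹
          ≤ (((m.1 (Fin.last k) : ℕ) : ℝ))⁻¹ := by
        apply inv_anti₀ (hc0 _)
        calc ((m.1 (Fin.last k) : ℕ) : ℝ) = ((m.1 (Fin.last k) : ℕ) : ℝ) ^ (1:ℝ) :=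
              (Real.rpow_one _).symm
        _ ≤ ((m.1 (Fin.last k) : ℕ) : ℝ) ^ z.re :=
              Real.rpow_le_rpow_of_exponent_le (hc1 _) hz
      apply mul_le_mul a1 a2 (by positivity) (Finset.prod_nonneg (fun j _ => by positivity))
    have hC : ∏ j ∈ Finset.univ.erase (P m), (((m.1 j : ℕ) : ℝ))⁻¹
        ≤ ((S m : ℕ) : ℝ) ^ (1/2:ℝ) *
          ∏ j ∈ Finset.univ.erase (P m), ((m.1 j : ℕ) : ℝ) ^ (-(1+ε)) := by
      have each : ∀ j ∈ Finset.univ.erase (P m), (((m.1 j : ℕ) : ℝ))⁻¹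
          ≤ ((S m : ℕ) : ℝ) ^ ε * ((m.1 j : ℕ) : ℝ) ^ (-(1+ε)) := by
        intro j _
        have h1 : (((m.1 j : ℕ) : ℝ))⁻¹
            = ((m.1 j : ℕ) : ℝ) ^ ε * ((m.1 j : ℕ) : ℝ) ^ (-(1+ε)) := by
          rw [← Real.rpow_add (hc0 j)]
          rw [show ε + -(1+ε) = -1 by ring, Real.rpow_neg_one]
        rw [h1]
        exact mul_le_mul_of_nonneg_right
          (Real.rpow_le_rpow (hc0 j).le (hcS j) hε0.le)
          (Real.rpow_nonneg (hc0 j).le _)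
      have hcard : (Finset.univ.erase (P m)).card = k := by
        rw [Finset.card_erase_of_mem (Finset.mem_univ _), Finset.card_univ, Fintype.card_fin]
        omega
      calc ∏ j ∈ Finset.univ.erase (P m), (((m.1 j : ℕ) : ℝ))⁻¹
          ≤ ∏ j ∈ Finset.univ.erase (P m),
            (((S m : ℕ) : ℝ) ^ ε * ((m.1 j : ℕ) : ℝ) ^ (-(1+ε))) :=
            Finset.prod_le_prod (fun j _ => inv_nonneg.2 (hc0 j).le) each
      _ = (((S m : ℕ) : ℝ) ^ ε) ^ (Finset.univ.erase (P m)).card *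
            ∏ j ∈ Finset.univ.erase (P m), ((m.1 j : ℕ) : ℝ) ^ (-(1+ε)) := by
            rw [Finset.prod_mul_distrib, Finset.prod_const]
      _ = ((S m : ℕ) : ℝ) ^ (1/2:ℝ) *
            ∏ j ∈ Finset.univ.erase (P m), ((m.1 j : ℕ) : ℝ) ^ (-(1+ε)) := by
            congr 1
            rw [hcard, ← Real.rpow_natCast (((S m : ℕ) : ℝ) ^ ε) k,
              ← Real.rpow_mul hSr0.le]
            rw [show ε * (k:ℝ) = 1/2 from by rw [mul_comm]; exact hεk]
    have hD : (((m.1 (P m) : ℕ) : ℝ))⁻¹ ≤ ((k:ℝ)+1) * (((S m : ℕ) : ℝ))⁻¹ := by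
      rw [mul_comm, ← div_eq_inv_mul, inv_eq_one_div, div_le_div_iff₀ (hc0 _) hSr0, one_mul]
      exact hSrP
    have hprodnn : (0:ℝ) ≤ ∏ j ∈ Finset.univ.erase (P m), ((m.1 j : ℕ) : ℝ) ^ (-(1+ε)) :=
      Finset.prod_nonneg (fun j _ => Real.rpow_nonneg (hc0 j).le _)
    calc (∏ j : Fin k, ((m.1 j.castSucc : ℕ) : ℝ) ^ s j)⁻¹ *
        (((m.1 (Fin.last k) : ℕ) : ℝ) ^ z.re)⁻¹
        ≤ ∏ j : Fin (k+1), (((m.1 j : ℕ) : ℝ))⁻¹ := hA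
    _ = (((m.1 (P m) : ℕ) : ℝ))⁻¹ * ∏ j ∈ Finset.univ.erase (P m), (((m.1 j : ℕ) : ℝ))⁻¹ :=
        (Finset.mul_prod_erase _ _ (Finset.mem_univ (P m))).symm
    _ ≤ (((k:ℝ)+1) * (((S m : ℕ) : ℝ))⁻¹) *
        (((S m : ℕ) : ℝ) ^ (1/2:ℝ) *
          ∏ j ∈ Finset.univ.erase (P m), ((m.1 j : ℕ) : ℝ) ^ (-(1+ε))) := by
        apply mul_le_mul hD hC
          (Finset.prod_nonneg (fun j _ => inv_nonneg.2 (hc0 j).le))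
          (by positivity)
    _ = ((k:ℝ)+1) * (((((S m : ℕ) : ℝ))⁻¹ * ((S m : ℕ) : ℝ) ^ (1/2:ℝ)) *
          ∏ j ∈ Finset.univ.erase (P m), ((m.1 j : ℕ) : ℝ) ^ (-(1+ε))) := by ring
    _ = ((k:ℝ)+1) * (((S m : ℕ) : ℝ) ^ (-(1/2:ℝ)) *
          ∏ j ∈ Finset.univ.erase (P m), ((m.1 j : ℕ) : ℝ) ^ (-(1+ε))) := by
        congr 2
        rw [← Real.rpow_neg_one ((S m : ℕ) : ℝ), ← Real.rpow_add hSr0]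
        norm_num
    _ ≤ ((k:ℝ)+1) * (((m.1 (q (P m)) : ℕ) : ℝ) ^ (-(1/2:ℝ)) *
          ∏ j ∈ Finset.univ.erase (P m), ((m.1 j : ℕ) : ℝ) ^ (-(1+ε))) := by
        apply mul_le_mul_of_nonneg_left
          (mul_le_mul_of_nonneg_right
            (Real.rpow_le_rpow_of_nonpos (hc0 _) (hcS _) (by norm_num)) hprodnn)
          (by positivity)
    _ = g (Ψ m) := by
        rw [hgΨ]
        congr 1
        have split : ∀ j ∈ Finset.univ.erase (P m),
            ((m.1 j : ℕ) : ℝ) ^ (-((1+ε) + if j = q (P m) then (1/2:ℝ) else 0))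
            = ((m.1 j : ℕ) : ℝ) ^ (-(1+ε)) *
              ((m.1 j : ℕ) : ℝ) ^ (-(if j = q (P m) then (1/2:ℝ) else 0)) := by
          intro j _
          rw [← Real.rpow_add (hc0 j)]
          congr 1
          ring
        rw [Finset.prod_congr rfl split, Finset.prod_mul_distrib]
        have h2 : ∏ j ∈ Finset.univ.erase (P m),
            ((m.1 j : ℕ) : ℝ) ^ (-(if j = q (P m) then (1/2:ℝ) else 0))
            = ((m.1 (q (P m)) : ℕ) : ℝ) ^ (-(1/2:ℝ)) := by
          have e1 : ∀ j ∈ Finset.univ.erase (P m),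
              ((m.1 j : ℕ) : ℝ) ^ (-(if j = q (P m) then (1/2:ℝ) else 0))
              = if j = q (P m) then ((m.1 j : ℕ) : ℝ) ^ (-(1/2:ℝ)) else 1 := by
            intro j _
            split
            · rfl
            · rw [neg_zero, Real.rpow_zero]
          rw [Finset.prod_congr rfl e1, Finset.prod_ite_eq',
            if_pos (Finset.mem_erase.2 ⟨hq _, Finset.mem_univ _⟩)]
        rw [h2]
        ring
  refine Summable.of_nonneg_of_le (fun m => ?_) hb (hgsum.comp_injective hΨ)
  · positivity
end
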